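/- arXiv:1407.0679 — 7 statements merged into one kernel-verified Lean document; each statement's English description precedes it below -/
import Mathlib

section
/- Relative Fatou theorem on the upper half-plane (absolutely continuous part): let η₁ and η₂ be finite Borel measures on ℝ with η₂ ≠ 0, and write the Lebesgue decomposition η₁ = f·η₂ + η_s where f is an η₂-integrable nonnegative function and η_s is a finite Borel measure singular with respect to η₂. Let h₁ and h₂ be the Poisson integrals of η₁ and η₂. Then for η₂-almost every x₀ ∈ ℝ and every aperture c > 0, h₁(z)/h₂(z) → f(x₀) as z → x₀ with z in the cone Γ_c(x₀). -/
open MeasureTheory Filter Topology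

/-- The Poisson kernel of the upper half-plane. -/
noncomputable def poissonKernelUHP (z : ℂ) (x : ℝ) : ℝ :=
  z.im / ((z.re - x) ^ 2 + z.im ^ 2)

/-- The Poisson integral of a measure on `ℝ`. -/
noncomputable def poissonIntegral (η : Measure ℝ) (z : ℂ) : ℝ :=
  ∫ x, poissonKernelUHP z x ∂η

/-- The nontangential cone of aperture `c` at `x₀`. -/
def cone (x₀ c : ℝ) : Set ℂ :=
  {z : ℂ | 0 < z.im ∧ |z.re - x₀| ≤ c * z.im}


open Set Metric
open scoped ENNReal

namespace RelFatou

noncomputable def Kk (x₀ t x : ℝ) : ℝ := t / (t ^ 2 + (x - x₀) ^ 2)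

variable {x₀ t s δ a c : ℝ}

lemma Kk_nonneg (ht : 0 < t) (x : ℝ) : 0 ≤ Kk x₀ t x := by
  unfold Kk; positivity

lemma Kk_le (ht : 0 < t) (x : ℝ) : Kk x₀ t x ≤ 1 / t := by
  unfold Kk
  rw [div_le_div_iff₀ (by positivity) ht]
  nlinarith [sq_nonneg (x - x₀)]

lemma Kk_continuous (ht : 0 < t) : Continuous (Kk x₀ t) := by
  apply Continuous.div continuous_const (by fun_prop)
  intro x; positivity

lemma superlevel_eq (ht : 0 < t) (hs : 0 < s) (hst : s < 1 / t) :
    {x : ℝ | s ≤ Kk x₀ t x} = closedBall x₀ (Real.sqrt (t / s - t ^ 2)) := by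
  have h1 : s * t < 1 := by
    have := (lt_div_iff₀ ht).1 hst; linarith
  have hts : t / s * s = t := div_mul_cancel₀ t hs.ne'
  have hpos : 0 < t / s - t ^ 2 := by
    rw [sub_pos, lt_div_iff₀ hs]; nlinarith
  ext x
  have hden : 0 < t ^ 2 + (x - x₀) ^ 2 := by positivity
  simp only [mem_setOf_eq, mem_closedBall, Real.dist_eq, Kk]
  rw [le_div_iff₀ hden]
  constructor
  · intro h
    apply Real.abs_le_sqrt
    rw [← sub_nonneg] at *
    nlinarith [mul_pos hs hden, hts]
  · intro h
    have h2 : (x - x₀) ^ 2 ≤ t / s - t ^ 2 := by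
      have := Real.sq_sqrt hpos.le
      calc (x - x₀) ^ 2 = |x - x₀| ^ 2 := (sq_abs _).symm
        _ ≤ Real.sqrt (t / s - t ^ 2) ^ 2 := by
            apply pow_le_pow_left₀ (abs_nonneg _) h
        _ = t / s - t ^ 2 := this
    nlinarith [hts, mul_le_mul_of_nonneg_left h2 hs.le]


/-- Lower bound for the kernel integral. -/
lemma lintegral_Kk_ge (ht : 0 < t) {u : ℝ} (hu : 0 < u) (ν : Measure ℝ) :
    ENNReal.ofReal (t / (t ^ 2 + u ^ 2)) * ν (closedBall x₀ u)
      ≤ ∫⁻ x, ENNReal.ofReal (Kk x₀ t x) ∂ν := by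
  have h1 : ∀ x ∈ closedBall x₀ u,
      ENNReal.ofReal (t / (t ^ 2 + u ^ 2)) ≤ ENNReal.ofReal (Kk x₀ t x) := by
    intro x hx
    apply ENNReal.ofReal_le_ofReal
    rw [mem_closedBall, Real.dist_eq] at hx
    have h2 : (x - x₀) ^ 2 ≤ u ^ 2 := by
      rw [← sq_abs]
      exact pow_le_pow_left₀ (abs_nonneg _) hx 2
    unfold Kk
    apply div_le_div_of_nonneg_left ht.le (by positivity)
    linarith
  calc ENNReal.ofReal (t / (t ^ 2 + u ^ 2)) * ν (closedBall x₀ u)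
      = ∫⁻ _ in closedBall x₀ u, ENNReal.ofReal (t / (t ^ 2 + u ^ 2)) ∂ν := by
        rw [setLIntegral_const, mul_comm]
    _ ≤ ∫⁻ x in closedBall x₀ u, ENNReal.ofReal (Kk x₀ t x) ∂ν :=
        setLIntegral_mono_ae ((ENNReal.measurable_ofReal.comp
          (Kk_continuous ht).measurable).aemeasurable) (ae_of_all _ h1)
    _ ≤ ∫⁻ x, ENNReal.ofReal (Kk x₀ t x) ∂ν := setLIntegral_le_lintegral _ _

/-- Core estimate. -/
lemma core (ht : 0 < t) (hδ : 0 < δ) {ε : ℝ≥0∞} (μ ν : Measure ℝ)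
    (h : ∀ r, 0 < r → r ≤ δ → μ (closedBall x₀ r) ≤ ε * ν (closedBall x₀ r)) :
    ∫⁻ x, ENNReal.ofReal (Kk x₀ t x) ∂μ
      ≤ ε * (∫⁻ x, ENNReal.ofReal (Kk x₀ t x) ∂ν) + μ univ * ENNReal.ofReal (t / δ ^ 2) := by
  have hKc := Kk_continuous (x₀ := x₀) ht
  set s₀ := t / (t ^ 2 + δ ^ 2) with hs₀
  have hs₀pos : 0 < s₀ := by positivity
  have hanti : Antitone fun s : ℝ => ν {a : ℝ | s ≤ Kk x₀ t a} := by
    intro a b hab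
    exact measure_mono fun x hx => le_trans hab hx
  rw [lintegral_eq_lintegral_meas_le μ (ae_of_all _ (Kk_nonneg ht)) hKc.aemeasurable,
    lintegral_eq_lintegral_meas_le ν (ae_of_all _ (Kk_nonneg ht)) hKc.aemeasurable]
  have key : ∀ᵐ s ∂(volume.restrict (Ioi (0:ℝ))),
      μ {a : ℝ | s ≤ Kk x₀ t a}
        ≤ ε * ν {a : ℝ | s ≤ Kk x₀ t a} + (Ioc 0 s₀).indicator (fun _ => μ univ) s := by
    have hne : ∀ᵐ s ∂(volume.restrict (Ioi (0:ℝ))), s ≠ 1 / t := by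
      apply ae_restrict_of_ae
      rw [ae_iff]
      have hset : {a : ℝ | ¬a ≠ 1 / t} = {1 / t} := by ext a; simp
      rw [hset]
      exact Real.volume_singleton
    filter_upwards [hne, ae_restrict_mem measurableSet_Ioi] with s hs1t hs
    rw [mem_Ioi] at hs
    by_cases hcase : s ≤ s₀
    · rw [Set.indicator_of_mem (mem_Ioc.2 ⟨hs, hcase⟩)]
      exact le_add_left (measure_mono (subset_univ _))
    · push_neg at hcase
      rw [Set.indicator_of_notMem (fun hmem => absurd hmem.2 (not_le.2 hcase)), add_zero]
      have hs₀lt : s₀ < 1 / t := by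
        rw [hs₀, div_lt_div_iff₀ (by positivity) ht]
        nlinarith
      rcases lt_or_gt_of_ne hs1t with hlt | hgt
      · -- s < 1/t : superlevel set is a closed ball of radius ≤ δ
        rw [superlevel_eq ht hs hlt]
        set ρ := Real.sqrt (t / s - t ^ 2) with hρ
        have hρpos : 0 < ρ := by
          apply Real.sqrt_pos.2
          have h1 : s * t < 1 := by
            have := (lt_div_iff₀ ht).1 hlt; linarith
          rw [sub_pos, lt_div_iff₀ hs]; nlinarith
        have hρle : ρ ≤ δ := by
          rw [hρ]
          have h3 := (div_lt_iff₀ (by positivity : (0:ℝ) < t ^ 2 + δ ^ 2)).1 hcase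
          have h4 : t / s ≤ t ^ 2 + δ ^ 2 := by
            rw [div_le_iff₀ hs]; nlinarith
          calc Real.sqrt (t / s - t ^ 2) ≤ Real.sqrt (δ ^ 2) :=
              Real.sqrt_le_sqrt (by nlinarith)
            _ = δ := by rw [Real.sqrt_sq hδ.le]
        exact h ρ hρpos hρle
      · -- s > 1/t : superlevel set is empty
        have : {a : ℝ | s ≤ Kk x₀ t a} = ∅ := by
          ext x
          simp only [mem_setOf_eq, mem_empty_iff_false, iff_false, not_le]
          exact lt_of_le_of_lt (Kk_le ht x) hgt
        rw [this]
        simp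
  calc ∫⁻ s in Ioi (0:ℝ), μ {a : ℝ | s ≤ Kk x₀ t a}
      ≤ ∫⁻ s in Ioi (0:ℝ), (ε * ν {a : ℝ | s ≤ Kk x₀ t a}
          + (Ioc 0 s₀).indicator (fun _ => μ univ) s) := lintegral_mono_ae key
    _ = ε * (∫⁻ s in Ioi (0:ℝ), ν {a : ℝ | s ≤ Kk x₀ t a})
          + ∫⁻ s in Ioi (0:ℝ), (Ioc 0 s₀).indicator (fun _ => μ univ) s := by
        rw [lintegral_add_left (hanti.measurable.const_mul ε),
          lintegral_const_mul _ hanti.measurable]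
    _ ≤ ε * (∫⁻ s in Ioi (0:ℝ), ν {a : ℝ | s ≤ Kk x₀ t a})
          + μ univ * ENNReal.ofReal (t / δ ^ 2) := by
        refine add_le_add le_rfl ?_
        rw [lintegral_indicator measurableSet_Ioc, setLIntegral_const,
          Measure.restrict_apply measurableSet_Ioc]
        have h2 : (Ioc 0 s₀ ∩ Ioi 0 : Set ℝ) = Ioc 0 s₀ :=
          Set.inter_eq_left.2 (fun y hy => hy.1)
        rw [h2, Real.volume_Ioc]
        apply mul_le_mul_right
        apply ENNReal.ofReal_le_ofReal
        rw [sub_zero, hs₀]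
        apply div_le_div_of_nonneg_left ht.le (by positivity)
        nlinarith

lemma sqrt_tendsto : Tendsto Real.sqrt (𝓝[>] (0:ℝ)) (𝓝[>] (0:ℝ)) := by
  rw [tendsto_nhdsWithin_iff]
  constructor
  · have h := (Real.continuous_sqrt.tendsto 0).mono_left (nhdsWithin_le_nhds (s := Ioi (0:ℝ)))
    simpa using h
  · filter_upwards [self_mem_nhdsWithin] with t ht
    exact Real.sqrt_pos.2 ht

lemma ratio_tendsto (x₀ : ℝ) (μ ν : Measure ℝ) [IsFiniteMeasure μ] [IsFiniteMeasure ν]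
    (hpos : ∀ r : ℝ, 0 < r → ν (closedBall x₀ r) ≠ 0)
    (hr : Tendsto (fun r => μ (closedBall x₀ r) / ν (closedBall x₀ r)) (𝓝[>] 0) (𝓝 0))
    (hq : Tendsto (fun r => ENNReal.ofReal r ^ 2 / ν (closedBall x₀ r)) (𝓝[>] 0) (𝓝 0)) :
    Tendsto (fun t => (∫⁻ x, ENNReal.ofReal (Kk x₀ t x) ∂μ)
      / (∫⁻ x, ENNReal.ofReal (Kk x₀ t x) ∂ν)) (𝓝[>] 0) (𝓝 0) := by
  rw [ENNReal.tendsto_nhds_zero]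
  intro ε hε
  have hε2 : (0:ℝ≥0∞) < ε / 2 := ENNReal.half_pos hε.ne'
  -- find δ such that the ball ratio is ≤ ε/2 on (0, δ]
  obtain ⟨δ, hδmem, hδsub⟩ := mem_nhdsGT_iff_exists_Ioc_subset.1
    (hr.eventually (Filter.Tendsto.eventually_le_const hε2 tendsto_id) : _)
  rw [mem_Ioi] at hδmem
  have hball : ∀ r : ℝ, 0 < r → r ≤ δ → μ (closedBall x₀ r) ≤ ε / 2 * ν (closedBall x₀ r) :=
    fun r h1 h2 =>
      (ENNReal.div_le_iff (hpos r h1) (measure_ne_top ν _)).1 (hδsub ⟨h1, h2⟩)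
  -- the auxiliary function controlling the far part
  set C : ℝ≥0∞ := μ univ * ENNReal.ofReal (2 / δ ^ 2) with hC
  have hCne : C ≠ ∞ := by
    rw [hC]
    exact ENNReal.mul_ne_top (measure_ne_top μ _) ENNReal.ofReal_ne_top
  set g : ℝ → ℝ≥0∞ := fun t => C * (ENNReal.ofReal t / ν (closedBall x₀ (Real.sqrt t)))
    with hg_def
  have hg : Tendsto g (𝓝[>] 0) (𝓝 0) := by
    have h1 : Tendsto (fun t : ℝ => ENNReal.ofReal t / ν (closedBall x₀ (Real.sqrt t)))
        (𝓝[>] 0) (𝓝 0) := by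
      have h2 := hq.comp sqrt_tendsto
      apply h2.congr'
      filter_upwards [self_mem_nhdsWithin] with t ht
      rw [mem_Ioi] at ht
      simp only [Function.comp_apply]
      rw [← ENNReal.ofReal_pow (Real.sqrt_nonneg t), Real.sq_sqrt ht.le]
    have := ENNReal.Tendsto.const_mul h1 (Or.inr hCne)
    simpa using this
  have hgev : ∀ᶠ t in 𝓝[>] (0:ℝ), g t ≤ ε / 2 :=
    hg.eventually (Filter.Tendsto.eventually_le_const hε2 tendsto_id)
  have hbound : ∀ᶠ t in 𝓝[>] (0:ℝ),
      (∫⁻ x, ENNReal.ofReal (Kk x₀ t x) ∂μ) / (∫⁻ x, ENNReal.ofReal (Kk x₀ t x) ∂ν)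
        ≤ ε / 2 + g t := by
    filter_upwards [self_mem_nhdsWithin, Ioc_mem_nhdsGT_of_mem ⟨le_rfl, zero_lt_one⟩]
      with t ht htle
    rw [mem_Ioi] at ht
    have ht1 : t ≤ 1 := htle.2
    set A := ∫⁻ x, ENNReal.ofReal (Kk x₀ t x) ∂μ with hA
    set B := ∫⁻ x, ENNReal.ofReal (Kk x₀ t x) ∂ν with hB
    have hcore : A ≤ ε / 2 * B + μ univ * ENNReal.ofReal (t / δ ^ 2) :=
      core ht hδmem μ ν hball
    have hsqrtpos : 0 < Real.sqrt t := Real.sqrt_pos.2 ht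
    set e := ν (closedBall x₀ (Real.sqrt t)) with he
    set c := ENNReal.ofReal (t / (t ^ 2 + t)) with hc
    have hc0 : c ≠ 0 := by
      rw [hc]
      simp only [ne_eq, ENNReal.ofReal_eq_zero, not_le]
      positivity
    have hctop : c ≠ ∞ := ENNReal.ofReal_ne_top
    have hBge : c * e ≤ B := by
      have := lintegral_Kk_ge (x₀ := x₀) ht hsqrtpos ν
      rwa [Real.sq_sqrt ht.le] at this
    calc A / B ≤ (ε / 2 * B + μ univ * ENNReal.ofReal (t / δ ^ 2)) / B :=
          ENNReal.div_le_div_right hcore _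
      _ = (ε / 2 * B) / B + (μ univ * ENNReal.ofReal (t / δ ^ 2)) / B := by
          rw [ENNReal.add_div]
      _ ≤ ε / 2 + (μ univ * ENNReal.ofReal (t / δ ^ 2)) / (c * e) := by
          apply add_le_add
          · rw [mul_div_assoc]
            calc ε / 2 * (B / B) ≤ ε / 2 * 1 :=
                  mul_le_mul_right ENNReal.div_self_le_one _
              _ = ε / 2 := mul_one _
          · exact ENNReal.div_le_div_left hBge _
      _ ≤ ε / 2 + g t := by
          apply add_le_add le_rfl
          have hfar : μ univ * ENNReal.ofReal (t / δ ^ 2)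
              ≤ c * (C * ENNReal.ofReal t) := by
            have heq : t / δ ^ 2 ≤ (t / (t ^ 2 + t)) * (2 / δ ^ 2 * t) := by
              have h1 : t / (t ^ 2 + t) * (2 / δ ^ 2 * t) = 2 * t * t / ((t ^ 2 + t) * δ ^ 2) := by
                field_simp
              rw [h1, div_le_div_iff₀ (by positivity) (by positivity)]
              nlinarith [mul_le_mul_of_nonneg_left ht1 (by positivity : (0:ℝ) ≤ t ^ 2 * δ ^ 2)]
            calc μ univ * ENNReal.ofReal (t / δ ^ 2)
                ≤ μ univ * ENNReal.ofReal ((t / (t ^ 2 + t)) * (2 / δ ^ 2 * t)) :=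
                  mul_le_mul_right (ENNReal.ofReal_le_ofReal heq) _
              _ = μ univ * (c * (ENNReal.ofReal (2 / δ ^ 2) * ENNReal.ofReal t)) := by
                  rw [ENNReal.ofReal_mul (by positivity), ENNReal.ofReal_mul (by positivity)]
              _ = c * (C * ENNReal.ofReal t) := by rw [hC]; ring
          calc (μ univ * ENNReal.ofReal (t / δ ^ 2)) / (c * e)
              ≤ (c * (C * ENNReal.ofReal t)) / (c * e) := ENNReal.div_le_div_right hfar _
            _ = (C * ENNReal.ofReal t) / e := by
                rw [ENNReal.mul_div_mul_left _ _ hc0 hctop]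
            _ = g t := by rw [hg_def, mul_div_assoc]
  filter_upwards [hbound, hgev] with t h1 h2
  calc (∫⁻ x, ENNReal.ofReal (Kk x₀ t x) ∂μ) / (∫⁻ x, ENNReal.ofReal (Kk x₀ t x) ∂ν)
      ≤ ε / 2 + g t := h1
    _ ≤ ε / 2 + ε / 2 := add_le_add le_rfl h2
    _ = ε := ENNReal.add_halves ε

lemma poissonKernel_eq (z : ℂ) : poissonKernelUHP z = Kk z.re z.im := by
  funext x
  unfold poissonKernelUHP Kk
  ring_nf

lemma Kk_compare (ht : 0 < t) (hc : 0 ≤ c) (ha : |a - x₀| ≤ c * t) (x : ℝ) :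
    Kk x₀ t x ≤ (2 * (1 + c ^ 2)) * Kk a t x := by
  have ha2 : (a - x₀) ^ 2 ≤ c ^ 2 * t ^ 2 := by
    have h1 : |a - x₀| ^ 2 ≤ (c * t) ^ 2 := pow_le_pow_left₀ (abs_nonneg _) ha 2
    rw [sq_abs] at h1
    calc (a - x₀) ^ 2 ≤ (c * t) ^ 2 := h1
      _ = c ^ 2 * t ^ 2 := by ring
  unfold Kk
  rw [mul_div_assoc', div_le_div_iff₀ (by positivity) (by positivity)]
  nlinarith [sq_nonneg ((x - x₀) + (x₀ - a)), sq_nonneg ((x - x₀) - (x₀ - a)), ht.le,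
    sq_nonneg (x - x₀), sq_nonneg t]

/-- Integrability of bounded continuous functions against finite measures. -/
lemma integrable_bdd {g : ℝ → ℝ} (μ : Measure ℝ) [IsFiniteMeasure μ] (hg : Continuous g)
    {M : ℝ} (hb : ∀ x, |g x| ≤ M) : Integrable g μ :=
  ⟨hg.aestronglyMeasurable, HasFiniteIntegral.of_bounded (C := M) (ae_of_all _ hb)⟩

lemma integral_eq_toReal_lintegral {g : ℝ → ℝ} (μ : Measure ℝ) (hg : Continuous g)
    (hnn : ∀ x, 0 ≤ g x) : ∫ x, g x ∂μ = (∫⁻ x, ENNReal.ofReal (g x) ∂μ).toReal := by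
  rw [integral_eq_lintegral_of_nonneg_ae (ae_of_all _ hnn) hg.aestronglyMeasurable]

/-- Transfer of integrals under `withDensity` with a nonnegative real density. -/
lemma integral_withDensity_ofReal (μ : Measure ℝ) {d : ℝ → ℝ} (hd : AEMeasurable d μ)
    (hdnn : ∀ x, 0 ≤ d x) (g : ℝ → ℝ) :
    ∫ x, g x ∂(μ.withDensity fun x => ENNReal.ofReal (d x)) = ∫ x, d x * g x ∂μ := by
  have h1 : (fun x => ENNReal.ofReal (d x)) = (fun x => ((d x).toNNReal : ℝ≥0∞)) := rfl
  rw [h1, integral_withDensity_eq_integral_smul₀ hd.real_toNNReal g]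
  congr 1
  funext x
  rw [NNReal.smul_def, Real.coe_toNNReal _ (hdnn x)]
  rfl

lemma integrable_mul_bdd {h g : ℝ → ℝ} (μ : Measure ℝ) (hh : Integrable h μ)
    (hg : Continuous g) {M : ℝ} (hb : ∀ x, |g x| ≤ M) :
    Integrable (fun x => h x * g x) μ := by
  have h1 := hh.bdd_mul hg.aestronglyMeasurable
    (ae_of_all _ fun x => by simpa [Real.norm_eq_abs] using hb x)
  exact h1.congr (ae_of_all _ fun x => mul_comm _ _)

/-- The key pointwise bound inside the cone. -/
lemma key_bound (η₁ η₂ η_s : Measure ℝ)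
    [IsFiniteMeasure η₁] [IsFiniteMeasure η₂] [IsFiniteMeasure η_s]
    (f : ℝ → ℝ) (hf_nonneg : 0 ≤ f) (hf_int : Integrable f η₂)
    (hdec : η₁ = η₂.withDensity (fun x => ENNReal.ofReal (f x)) + η_s)
    (x₀ : ℝ) (hc : 0 < c)
    (hpos : ∀ r : ℝ, 0 < r → η₂ (closedBall x₀ r) ≠ 0)
    (z : ℂ) (hz : z ∈ cone x₀ c) :
    |poissonIntegral η₁ z / poissonIntegral η₂ z - f x₀|
      ≤ (2 * (1 + c ^ 2)) ^ 2 *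
        ((((∫⁻ x, ENNReal.ofReal (Kk x₀ z.im x)
              ∂(η₂.withDensity fun y => ENNReal.ofReal |f y - f x₀|))
            / (∫⁻ x, ENNReal.ofReal (Kk x₀ z.im x) ∂η₂)).toReal)
          + (((∫⁻ x, ENNReal.ofReal (Kk x₀ z.im x) ∂η_s)
            / (∫⁻ x, ENNReal.ofReal (Kk x₀ z.im x) ∂η₂)).toReal)) := by
  obtain ⟨ht, hcone⟩ := hz
  set t := z.im
  set C := 2 * (1 + c ^ 2) with hC
  have hC1 : (1:ℝ) ≤ C := by nlinarith [sq_nonneg c]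
  have hC0 : (0:ℝ) < C := by positivity
  have hPK : poissonKernelUHP z = Kk z.re t := poissonKernel_eq z
  -- kernel comparison
  have hcmp1 : ∀ x, poissonKernelUHP z x ≤ C * Kk x₀ t x := by
    intro x
    rw [hPK]
    have : |x₀ - z.re| ≤ c * t := by rwa [abs_sub_comm]
    exact Kk_compare ht hc.le this x
  have hcmp2 : ∀ x, Kk x₀ t x ≤ C * poissonKernelUHP z x := by
    intro x
    rw [hPK]
    exact Kk_compare ht hc.le hcone x
  -- continuity / nonnegativity / bounds
  have hKcont : Continuous (Kk x₀ t) := Kk_continuous ht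
  have hKnn : ∀ x, 0 ≤ Kk x₀ t x := Kk_nonneg ht
  have hKb : ∀ x, |Kk x₀ t x| ≤ 1 / t := fun x => by
    rw [abs_of_nonneg (hKnn x)]; exact Kk_le ht x
  have hPcont : Continuous (poissonKernelUHP z) := by rw [hPK]; exact Kk_continuous ht
  have hPnn : ∀ x, 0 ≤ poissonKernelUHP z x := by rw [hPK]; exact Kk_nonneg ht
  have hPb : ∀ x, |poissonKernelUHP z x| ≤ C * (1 / t) := fun x => by
    rw [abs_of_nonneg (hPnn x)]
    calc poissonKernelUHP z x ≤ 1 / t := by rw [hPK]; exact Kk_le ht x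
      _ ≤ C * (1 / t) := le_mul_of_one_le_left (by positivity) hC1
  -- integrable things
  have hfd : Integrable (fun y => |f y - f x₀|) η₂ := (hf_int.sub (integrable_const _)).abs
  have iP2 : Integrable (poissonKernelUHP z) η₂ := integrable_bdd η₂ hPcont hPb
  have iPs : Integrable (poissonKernelUHP z) η_s := integrable_bdd η_s hPcont hPb
  have iK2 : Integrable (Kk x₀ t) η₂ := integrable_bdd η₂ hKcont hKb
  have iKs : Integrable (Kk x₀ t) η_s := integrable_bdd η_s hKcont hKb
  have ifP : Integrable (fun x => f x * poissonKernelUHP z x) η₂ :=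
    integrable_mul_bdd η₂ hf_int hPcont hPb
  have iabsP : Integrable (fun x => |f x - f x₀| * poissonKernelUHP z x) η₂ :=
    integrable_mul_bdd η₂ hfd hPcont hPb
  have iabsK : Integrable (fun x => |f x - f x₀| * Kk x₀ t x) η₂ :=
    integrable_mul_bdd η₂ hfd hKcont hKb
  -- withDensity measure
  set μ₁ : Measure ℝ := η₂.withDensity fun y => ENNReal.ofReal |f y - f x₀| with hμ₁
  set Lμ₁ := ∫⁻ x, ENNReal.ofReal (Kk x₀ t x) ∂μ₁ with hLμ₁
  set Lηs := ∫⁻ x, ENNReal.ofReal (Kk x₀ t x) ∂η_s with hLηs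
  set Lν := ∫⁻ x, ENNReal.ofReal (Kk x₀ t x) ∂η₂ with hLν
  have hfaem : AEMeasurable f η₂ := hf_int.aestronglyMeasurable.aemeasurable
  have hfdaem : AEMeasurable (fun y => |f y - f x₀|) η₂ :=
    hfd.aestronglyMeasurable.aemeasurable
  set num := poissonIntegral η₁ z with hnumdef
  set den := poissonIntegral η₂ z with hdendef
  have iPwd : Integrable (poissonKernelUHP z) (η₂.withDensity fun x => ENNReal.ofReal (f x)) := by
    apply (integrable_bdd η₁ hPcont hPb).mono_measure
    rw [hdec]
    exact Measure.le_add_right le_rfl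
  have hnum : num = (∫ x, f x * poissonKernelUHP z x ∂η₂) + ∫ x, poissonKernelUHP z x ∂η_s := by
    rw [hnumdef, poissonIntegral, hdec, integral_add_measure iPwd iPs,
      integral_withDensity_ofReal η₂ hfaem hf_nonneg]
  have hsub : num - f x₀ * den
      = (∫ x, (f x - f x₀) * poissonKernelUHP z x ∂η₂) + ∫ x, poissonKernelUHP z x ∂η_s := by
    rw [hnum]
    have h5 : ∫ x, (f x - f x₀) * poissonKernelUHP z x ∂η₂
        = (∫ x, f x * poissonKernelUHP z x ∂η₂) - ∫ x, f x₀ * poissonKernelUHP z x ∂η₂ := by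
      rw [← integral_sub ifP (iP2.const_mul _)]
      congr 1; funext x; ring
    rw [h5, integral_const_mul, hdendef, poissonIntegral]
    ring
  -- real/lintegral identifications
  have e1 : ∫ x, |f x - f x₀| * Kk x₀ t x ∂η₂ = Lμ₁.toReal := by
    rw [hLμ₁, hμ₁,
      ← integral_withDensity_ofReal η₂ hfdaem (fun y => abs_nonneg _) (Kk x₀ t)]
    exact integral_eq_toReal_lintegral _ hKcont hKnn
  have e2 : ∫ x, Kk x₀ t x ∂η_s = Lηs.toReal := integral_eq_toReal_lintegral η_s hKcont hKnn
  have e3 : ∫ x, Kk x₀ t x ∂η₂ = Lν.toReal := integral_eq_toReal_lintegral η₂ hKcont hKnn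
  -- numerator bound
  have hb1 : |∫ x, (f x - f x₀) * poissonKernelUHP z x ∂η₂| ≤ C * Lμ₁.toReal := by
    calc |∫ x, (f x - f x₀) * poissonKernelUHP z x ∂η₂|
        ≤ ∫ x, |f x - f x₀| * poissonKernelUHP z x ∂η₂ := by
          have h6 := norm_integral_le_integral_norm (μ := η₂)
            (f := fun x => (f x - f x₀) * poissonKernelUHP z x)
          simpa [Real.norm_eq_abs, abs_mul, abs_of_nonneg (hPnn _)] using h6
      _ ≤ ∫ x, C * (|f x - f x₀| * Kk x₀ t x) ∂η₂ := by
          apply integral_mono iabsP (iabsK.const_mul C)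
          intro x
          calc |f x - f x₀| * poissonKernelUHP z x ≤ |f x - f x₀| * (C * Kk x₀ t x) :=
                mul_le_mul_of_nonneg_left (hcmp1 x) (abs_nonneg _)
            _ = C * (|f x - f x₀| * Kk x₀ t x) := by ring
      _ = C * Lμ₁.toReal := by rw [integral_const_mul, e1]
  have hb2 : |∫ x, poissonKernelUHP z x ∂η_s| ≤ C * Lηs.toReal := by
    rw [abs_of_nonneg (integral_nonneg hPnn)]
    calc ∫ x, poissonKernelUHP z x ∂η_s ≤ ∫ x, C * Kk x₀ t x ∂η_s :=
          integral_mono iPs (iKs.const_mul C) hcmp1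
      _ = C * Lηs.toReal := by rw [integral_const_mul, e2]
  -- denominator bounds
  have hLνtop : Lν ≠ ∞ := by
    apply ne_of_lt
    calc Lν ≤ ∫⁻ _, ENNReal.ofReal (1 / t) ∂η₂ :=
          lintegral_mono fun x => ENNReal.ofReal_le_ofReal (Kk_le ht x)
      _ = ENNReal.ofReal (1 / t) * η₂ univ := lintegral_const _
      _ < ∞ := ENNReal.mul_lt_top ENNReal.ofReal_lt_top (measure_lt_top η₂ _)
  have hLνpos : 0 < Lν := by
    apply lt_of_lt_of_le _ (lintegral_Kk_ge ht one_pos η₂)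
    apply ENNReal.mul_pos
    · simp only [ne_eq, ENNReal.ofReal_eq_zero, not_le]
      positivity
    · exact hpos 1 one_pos
  have hν'pos : 0 < Lν.toReal := ENNReal.toReal_pos hLνpos.ne' hLνtop
  have hdenge : Lν.toReal / C ≤ den := by
    rw [div_le_iff₀ hC0]
    calc Lν.toReal = ∫ x, Kk x₀ t x ∂η₂ := e3.symm
      _ ≤ ∫ x, C * poissonKernelUHP z x ∂η₂ := integral_mono iK2 (iP2.const_mul C) hcmp2
      _ = C * den := by rw [integral_const_mul, hdendef, poissonIntegral]
      _ = den * C := mul_comm _ _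
  have hdenpos : 0 < den := lt_of_lt_of_le (by positivity) hdenge
  -- final chain
  have hfrac : num / den - f x₀ = (num - f x₀ * den) / den := by
    field_simp
  rw [hfrac, abs_div, abs_of_pos hdenpos]
  calc |num - f x₀ * den| / den
      ≤ (C * Lμ₁.toReal + C * Lηs.toReal) / den := by
        have hnb : |num - f x₀ * den| ≤ C * Lμ₁.toReal + C * Lηs.toReal := by
          rw [hsub]
          exact (abs_add_le _ _).trans (add_le_add hb1 hb2)
        exact (div_le_div_iff_of_pos_right hdenpos).2 hnb
      _ ≤ (C * Lμ₁.toReal + C * Lηs.toReal) / (Lν.toReal / C) := by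
        apply div_le_div_of_nonneg_left _ (by positivity) hdenge
        positivity
      _ = C ^ 2 * (Lμ₁.toReal / Lν.toReal + Lηs.toReal / Lν.toReal) := by
        field_simp
      _ = C ^ 2 * ((Lμ₁ / Lν).toReal + (Lηs / Lν).toReal) := by
        rw [ENNReal.toReal_div, ENNReal.toReal_div]

end RelFatou

open RelFatou in
theorem relative_fatou_ac
    (η₁ η₂ η_s : Measure ℝ) [IsFiniteMeasure η₁] [IsFiniteMeasure η₂] [IsFiniteMeasure η_s]
    (hη₂ : η₂ ≠ 0)
    (f : ℝ → ℝ) (hf_nonneg : 0 ≤ f) (hf_int : Integrable f η₂)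
    (hsing : η_s.MutuallySingular η₂)
    (hdec : η₁ = η₂.withDensity (fun x => ENNReal.ofReal (f x)) + η_s) :
    ∀ᵐ x₀ : ℝ ∂η₂, ∀ c > (0 : ℝ),
      Tendsto (fun z : ℂ => poissonIntegral η₁ z / poissonIntegral η₂ z)
        (𝓝[cone x₀ c] (x₀ : ℂ)) (𝓝 (f x₀)) := by
  have h_sing : ∀ᵐ x₀ ∂η₂, Tendsto
      (fun r => η_s (closedBall x₀ r) / η₂ (closedBall x₀ r)) (𝓝[>] 0) (𝓝 0) := by
    filter_upwards [Besicovitch.ae_tendsto_rnDeriv η_s η₂, hsing.rnDeriv_ae_eq_zero]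
      with x hx h0
    simp only [Pi.zero_apply] at h0
    rwa [h0] at hx
  have h_vol := Besicovitch.ae_tendsto_rnDeriv volume η₂
  have h_vol_top := Measure.rnDeriv_lt_top volume η₂
  have h_leb : ∀ᵐ x₀ ∂η₂, Tendsto
      (fun r => ⨍ y in closedBall x₀ r, |f y - f x₀| ∂η₂) (𝓝[>] 0) (𝓝 0) := by
    filter_upwards [(Besicovitch.vitaliFamily (μ := η₂)).ae_tendsto_average_norm_sub
      hf_int.locallyIntegrable] with x hx
    have h2 := hx.comp (Besicovitch.tendsto_filterAt η₂ x)
    simpa [Real.norm_eq_abs, Function.comp_def] using h2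
  filter_upwards [h_sing, h_vol, h_vol_top, h_leb] with x₀ hx_sing hx_vol hx_top hx_leb
  have hpos : ∀ r : ℝ, 0 < r → η₂ (closedBall x₀ r) ≠ 0 := by
    intro r hr h0
    have hev : (fun ρ => volume (closedBall x₀ ρ) / η₂ (closedBall x₀ ρ))
        =ᶠ[𝓝[>] (0:ℝ)] (fun _ => (∞:ℝ≥0∞)) := by
      filter_upwards [Ioc_mem_nhdsGT_of_mem ⟨le_rfl, hr⟩] with ρ hρ
      have h1 : η₂ (closedBall x₀ ρ) = 0 :=
        measure_mono_null (closedBall_subset_closedBall hρ.2) h0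
      have hvol : volume (closedBall x₀ ρ) ≠ 0 := by
        rw [Real.volume_closedBall]
        simp only [ne_eq, ENNReal.ofReal_eq_zero, not_le]
        linarith [hρ.1]
      rw [h1, ENNReal.div_zero hvol]
    have h2 : Tendsto (fun _ : ℝ => (∞:ℝ≥0∞)) (𝓝[>] (0:ℝ)) (𝓝 (volume.rnDeriv η₂ x₀)) :=
      hx_vol.congr' hev
    have h3 := tendsto_nhds_unique h2 tendsto_const_nhds
    exact hx_top.ne h3
  have hq : Tendsto (fun r => ENNReal.ofReal r ^ 2 / η₂ (closedBall x₀ r)) (𝓝[>] 0) (𝓝 0) := by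
    have h1 : Tendsto (fun r : ℝ => ENNReal.ofReal (r / 2)) (𝓝[>] (0:ℝ)) (𝓝 0) := by
      have h0 : Tendsto (fun r : ℝ => r / 2) (𝓝 (0:ℝ)) (𝓝 0) := by
        simpa using (continuous_id.div_const 2).tendsto (0:ℝ)
      have h0' := (ENNReal.continuous_ofReal.tendsto 0).comp h0
      simp only [Function.comp, ENNReal.ofReal_zero] at h0'
      exact h0'.mono_left nhdsWithin_le_nhds
    have h2 := ENNReal.Tendsto.mul h1 (Or.inr hx_top.ne) hx_vol (Or.inr (by simp))
    rw [zero_mul] at h2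
    apply h2.congr'
    filter_upwards [self_mem_nhdsWithin] with r hr
    rw [mem_Ioi] at hr
    rw [Real.volume_closedBall, ← mul_div_assoc, ← ENNReal.ofReal_mul (by linarith),
      show r / 2 * (2 * r) = r ^ 2 by ring, ENNReal.ofReal_pow hr.le]
  intro c hc
  set μ₁ : Measure ℝ := η₂.withDensity fun y => ENNReal.ofReal |f y - f x₀| with hμ₁
  have hfd : Integrable (fun y => |f y - f x₀|) η₂ := (hf_int.sub (integrable_const _)).abs
  haveI : IsFiniteMeasure μ₁ := by
    constructor
    rw [hμ₁, withDensity_apply _ MeasurableSet.univ, Measure.restrict_univ,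
      ← ofReal_integral_eq_lintegral_ofReal hfd (ae_of_all _ fun y => abs_nonneg _)]
    exact ENNReal.ofReal_lt_top
  have hr₁ : Tendsto (fun r => μ₁ (closedBall x₀ r) / η₂ (closedBall x₀ r)) (𝓝[>] 0) (𝓝 0) := by
    have h1 : ∀ r : ℝ, 0 < r → μ₁ (closedBall x₀ r) / η₂ (closedBall x₀ r)
        = ENNReal.ofReal (⨍ y in closedBall x₀ r, |f y - f x₀| ∂η₂) := by
      intro r hr
      have hb0 : η₂ (closedBall x₀ r) ≠ 0 := hpos r hr
      have hbtop : η₂ (closedBall x₀ r) ≠ ∞ := measure_ne_top _ _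
      have hbR : 0 < (η₂ (closedBall x₀ r)).toReal := ENNReal.toReal_pos hb0 hbtop
      rw [setAverage_eq, smul_eq_mul, hμ₁, withDensity_apply _ measurableSet_closedBall,
        ← ofReal_integral_eq_lintegral_ofReal hfd.integrableOn
          (ae_restrict_of_ae (ae_of_all _ fun y => abs_nonneg _)),
        inv_mul_eq_div, measureReal_def, ENNReal.ofReal_div_of_pos hbR, ENNReal.ofReal_toReal hbtop]
    have h2 : Tendsto (fun r => ENNReal.ofReal (⨍ y in closedBall x₀ r, |f y - f x₀| ∂η₂))
        (𝓝[>] (0:ℝ)) (𝓝 0) := by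
      have h3 := (ENNReal.continuous_ofReal.tendsto 0).comp hx_leb
      simpa [Function.comp_def] using h3
    apply h2.congr'
    filter_upwards [self_mem_nhdsWithin] with r hr
    exact (h1 r hr).symm
  have hAten := ratio_tendsto x₀ μ₁ η₂ hpos hr₁ hq
  have hBten := ratio_tendsto x₀ η_s η₂ hpos hx_sing hq
  set C := 2 * (1 + c ^ 2) with hC
  set G : ℝ → ℝ := fun t => C ^ 2 *
    (((∫⁻ x, ENNReal.ofReal (Kk x₀ t x) ∂μ₁)
        / (∫⁻ x, ENNReal.ofReal (Kk x₀ t x) ∂η₂)).toReal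
      + ((∫⁻ x, ENNReal.ofReal (Kk x₀ t x) ∂η_s)
        / (∫⁻ x, ENNReal.ofReal (Kk x₀ t x) ∂η₂)).toReal) with hG
  have hGten : Tendsto G (𝓝[>] (0:ℝ)) (𝓝 0) := by
    have h1 := (ENNReal.tendsto_toReal ENNReal.zero_ne_top).comp hAten
    have h2 := (ENNReal.tendsto_toReal ENNReal.zero_ne_top).comp hBten
    simp only [Function.comp, ENNReal.toReal_zero] at h1 h2
    have h3 := Tendsto.const_mul (C ^ 2) (h1.add h2)
    simp only [add_zero, mul_zero] at h3
    exact h3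
  have him : Tendsto (fun z : ℂ => z.im) (𝓝[cone x₀ c] (x₀:ℂ)) (𝓝[>] 0) := by
    rw [tendsto_nhdsWithin_iff]
    constructor
    · have h4 := (Complex.continuous_im.tendsto (x₀:ℂ)).mono_left
        (nhdsWithin_le_nhds (s := cone x₀ c))
      simpa using h4
    · filter_upwards [self_mem_nhdsWithin] with z hz
      exact hz.1
  have hGz : Tendsto (fun z : ℂ => G z.im) (𝓝[cone x₀ c] (x₀:ℂ)) (𝓝 0) := hGten.comp him
  have habs : ∀ᶠ z in 𝓝[cone x₀ c] (x₀:ℂ),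
      |poissonIntegral η₁ z / poissonIntegral η₂ z - f x₀| ≤ G z.im := by
    filter_upwards [self_mem_nhdsWithin] with z hz
    exact key_bound η₁ η₂ η_s f hf_nonneg hf_int hdec x₀ hc hpos z hz
  have hzero : Tendsto (fun z : ℂ => |poissonIntegral η₁ z / poissonIntegral η₂ z - f x₀|)
      (𝓝[cone x₀ c] (x₀:ℂ)) (𝓝 0) :=
    squeeze_zero' (Eventually.of_forall fun z => abs_nonneg _) habs hGz
  rw [tendsto_iff_dist_tendsto_zero]
  simpa [Real.dist_eq] using hzero
end

section
/- Uniqueness of the Poisson integral representation on the upper half-plane: let η₁ and η₂ be finite Borel measures on ℝ such that ∫_ℝ P(z,x) dη₁(x) = ∫_ℝ P(z,x) dη₂(x) for every z ∈ H. Then η₁ = η₂. -/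
open MeasureTheory

open Filter Topology Real

namespace PoissonUnique

/-- The Cauchy-type kernel as a function of the horizontal coordinate. -/
noncomputable def K (y a t : ℝ) : ℝ := y / ((a - t) ^ 2 + y ^ 2)

lemma K_pos {y : ℝ} (hy : 0 < y) (a t : ℝ) : 0 < K y a t := by
  apply div_pos hy
  positivity

lemma denom_ne {y : ℝ} (hy : 0 < y) (a t : ℝ) : (a - t) ^ 2 + y ^ 2 ≠ 0 := by
  positivity

lemma K_continuous {y : ℝ} (hy : 0 < y) :
    Continuous (fun p : ℝ × ℝ => K y p.1 p.2) := by
  apply continuous_const.div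
  · fun_prop
  · intro p
    exact denom_ne hy p.1 p.2

/-- Change of variables: `∫ a, f a * K y a t = ∫ u, f (t + y*u) * (1+u²)⁻¹`. -/
lemma change_var {y : ℝ} (hy : 0 < y) (t : ℝ) (f : ℝ → ℝ) :
    ∫ u, f (t + y * u) * (1 + u ^ 2)⁻¹ = ∫ a, f a * K y a t := by
  have hy' : y ≠ 0 := hy.ne'
  set h : ℝ → ℝ := fun a => f a * K y a t with hh
  have step1 : ∀ u : ℝ, f (t + y * u) * (1 + u ^ 2)⁻¹ = y • h (t + y * u) := by
    intro u
    simp only [hh, K, smul_eq_mul]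
    have h1 : (1 : ℝ) + u ^ 2 ≠ 0 := by positivity
    have h2 : (t + y * u - t) ^ 2 + y ^ 2 ≠ 0 := denom_ne hy _ _
    field_simp
    ring
  calc ∫ u, f (t + y * u) * (1 + u ^ 2)⁻¹
      = ∫ u, y • h (t + y * u) := by simp_rw [step1]
    _ = y • ∫ u, h (t + y * u) := integral_smul y _
    _ = y • ∫ u, (fun x => h (t + x)) (y * u) := by norm_num
    _ = y • (|y⁻¹| • ∫ x, h (t + x)) := by
        rw [MeasureTheory.Measure.integral_comp_mul_left (fun x => h (t + x)) y]
    _ = y • (|y⁻¹| • ∫ x, h x) := by rw [integral_add_left_eq_self h t]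
    _ = ∫ a, h a := by
        rw [abs_of_pos (inv_pos.2 hy)]
        simp only [smul_eq_mul, ← mul_assoc, mul_inv_cancel₀ hy', one_mul]

lemma integrable_K {y : ℝ} (hy : 0 < y) (t : ℝ) : Integrable (K y · t) := by
  have hy' : y ≠ 0 := hy.ne'
  have base : Integrable (fun v : ℝ => (1 + v ^ 2)⁻¹) := integrable_inv_one_add_sq
  have h1 : Integrable (fun u : ℝ => (1 + (u * y⁻¹) ^ 2)⁻¹) :=
    (integrable_comp_mul_right_iff (fun v : ℝ => (1 + v ^ 2)⁻¹) (inv_ne_zero hy')).2 base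
  have h2 : Integrable (fun u : ℝ => y⁻¹ * (1 + (u * y⁻¹) ^ 2)⁻¹) := h1.const_mul _
  have h3 : Integrable (fun a : ℝ => y⁻¹ * (1 + ((a - t) * y⁻¹) ^ 2)⁻¹) := by
    have := h2.comp_add_right (-t)
    simpa [sub_eq_add_neg] using this
  have : (fun a : ℝ => y⁻¹ * (1 + ((a - t) * y⁻¹) ^ 2)⁻¹) = (K y · t) := by
    funext a
    have h2' : (a - t) ^ 2 + y ^ 2 ≠ 0 := denom_ne hy a t
    simp only [K]
    field_simp
    ring
  rwa [this] at h3

lemma integral_K {y : ℝ} (hy : 0 < y) (t : ℝ) : ∫ a, K y a t = π := by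
  have := change_var hy t (fun _ => (1 : ℝ))
  simp only [one_mul] at this
  rw [← this, integral_univ_inv_one_add_sq]

lemma integrable_mul_K {y : ℝ} (hy : 0 < y) (t : ℝ) {f : ℝ → ℝ} {C : ℝ}
    (hf : Continuous f) (hC : ∀ x, |f x| ≤ C) :
    Integrable (fun a => f a * K y a t) := by
  have hcont : Continuous (fun a => f a * K y a t) := by
    apply hf.mul
    exact continuous_const.div (by fun_prop) (fun a => denom_ne hy a t)
  refine ((integrable_K hy t).const_mul C).mono' hcont.aestronglyMeasurable ?_
  filter_upwards with a
  rw [Real.norm_eq_abs, abs_mul, abs_of_pos (K_pos hy a t)]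
  exact mul_le_mul_of_nonneg_right (hC a) (K_pos hy a t).le

end PoissonUnique

open PoissonUnique

theorem poisson_integral_representation_unique
    (η₁ η₂ : Measure ℝ) [IsFiniteMeasure η₁] [IsFiniteMeasure η₂]
    (h : ∀ z : ℂ, 0 < z.im →
      ∫ x, poissonKernelUHP z x ∂η₁ = ∫ x, poissonKernelUHP z x ∂η₂) :
    η₁ = η₂ := by
  -- Reduce to equality of integrals of bounded continuous ℝ-valued functions
  have main : ∀ (f : ℝ → ℝ) (C : ℝ), Continuous f → (∀ x, |f x| ≤ C) →
      ∫ t, f t ∂η₁ = ∫ t, f t ∂η₂ := by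
    intro f C hf hC
    have hC0 : 0 ≤ C := le_trans (abs_nonneg _) (hC 0)
    set y : ℕ → ℝ := fun n => ((n : ℝ) + 1)⁻¹ with hy_def
    have hy : ∀ n, 0 < y n := fun n => by positivity
    have hy0 : Tendsto y atTop (𝓝 0) := tendsto_one_div_add_atTop_nhds_zero_nat.congr (by
      intro n; simp [hy_def, one_div])
    -- Equality of the smoothed integrals, via Fubini
    have prodInt : ∀ (η : Measure ℝ) [IsFiniteMeasure η], ∀ n,
        Integrable (fun p : ℝ × ℝ => f p.1 * K (y n) p.1 p.2) (volume.prod η) := by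
      intro η _ n
      have hsm : AEStronglyMeasurable (fun p : ℝ × ℝ => f p.1 * K (y n) p.1 p.2)
          (volume.prod η) :=
        ((hf.comp continuous_fst).mul (K_continuous (hy n))).aestronglyMeasurable
      refine (integrable_prod_iff' hsm).2 ⟨?_, ?_⟩
      · filter_upwards with t
        exact integrable_mul_K (hy n) t hf hC
      · have hsm2 : AEStronglyMeasurable
            (fun t : ℝ => ∫ a, ‖f a * K (y n) a t‖) η := by
          have : AEStronglyMeasurable (fun p : ℝ × ℝ => ‖f p.2 * K (y n) p.2 p.1‖)
              (η.prod volume) := by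
            apply Continuous.aestronglyMeasurable
            exact ((hf.comp continuous_snd).mul
              ((K_continuous (hy n)).comp (continuous_snd.prodMk continuous_fst))).norm
          exact this.integral_prod_right'
        refine (integrable_const (C * π)).mono' hsm2 ?_
        filter_upwards with t
        rw [Real.norm_eq_abs, abs_of_nonneg (integral_nonneg fun a => norm_nonneg _)]
        calc ∫ a, ‖f a * K (y n) a t‖ ≤ ∫ a, C * K (y n) a t := by
              apply integral_mono ((integrable_mul_K (hy n) t hf hC).norm)
                ((integrable_K (hy n) t).const_mul C)
              intro a
              show ‖f a * K (y n) a t‖ ≤ C * K (y n) a t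
              rw [Real.norm_eq_abs, abs_mul, abs_of_pos (K_pos (hy n) a t)]
              exact mul_le_mul_of_nonneg_right (hC a) (K_pos (hy n) a t).le
          _ = C * π := by rw [integral_const_mul, integral_K (hy n) t]
    have smoothedEq : ∀ n,
        ∫ t, (∫ a, f a * K (y n) a t) ∂η₁ = ∫ t, (∫ a, f a * K (y n) a t) ∂η₂ := by
      intro n
      have fub₁ := integral_integral_swap (f := fun a t => f a * K (y n) a t) (prodInt η₁ n)
      have fub₂ := integral_integral_swap (f := fun a t => f a * K (y n) a t) (prodInt η₂ n)
      rw [← fub₁, ← fub₂]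
      apply integral_congr_ae
      filter_upwards with a
      show ∫ t, f a * K (y n) a t ∂η₁ = ∫ t, f a * K (y n) a t ∂η₂
      set z : ℂ := (a : ℂ) + (y n : ℂ) * Complex.I with hz_def
      have hzre : z.re = a := by simp [hz_def]
      have hzim : z.im = y n := by simp [hz_def]
      have hz : (0 : ℝ) < z.im := by rw [hzim]; exact hy n
      have := h z hz
      simp only [poissonKernelUHP, hzre, hzim] at this
      have hK : ∀ t, K (y n) a t = y n / ((a - t) ^ 2 + (y n) ^ 2) := fun t => rfl
      simp_rw [hK, integral_const_mul, this]
    -- Dominated convergence in t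
    have lim : ∀ (η : Measure ℝ) [IsFiniteMeasure η],
        Tendsto (fun n => ∫ t, (∫ a, f a * K (y n) a t) ∂η) atTop
          (𝓝 (∫ t, π * f t ∂η)) := by
      intro η _
      apply tendsto_integral_of_dominated_convergence (fun _ => C * π)
      · intro n
        exact ((prodInt η n).integral_prod_right).aestronglyMeasurable
      · exact integrable_const _
      · intro n
        filter_upwards with t
        calc ‖∫ a, f a * K (y n) a t‖ ≤ ∫ a, ‖f a * K (y n) a t‖ :=
              norm_integral_le_integral_norm _
          _ ≤ ∫ a, C * K (y n) a t := by
              apply integral_mono ((integrable_mul_K (hy n) t hf hC).norm)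
                ((integrable_K (hy n) t).const_mul C)
              intro a
              show ‖f a * K (y n) a t‖ ≤ C * K (y n) a t
              rw [Real.norm_eq_abs, abs_mul, abs_of_pos (K_pos (hy n) a t)]
              exact mul_le_mul_of_nonneg_right (hC a) (K_pos (hy n) a t).le
          _ = C * π := by rw [integral_const_mul, integral_K (hy n) t]
      · filter_upwards with t
        -- pointwise: ∫ a, f a * K (y n) a t → π * f t
        have hrw : ∀ n, ∫ a, f a * K (y n) a t = ∫ u, f (t + y n * u) * (1 + u ^ 2)⁻¹ :=
          fun n => (change_var (hy n) t f).symm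
        simp_rw [hrw]
        have target : π * f t = ∫ u : ℝ, f t * (1 + u ^ 2)⁻¹ := by
          rw [integral_const_mul, integral_univ_inv_one_add_sq]; ring
        rw [target]
        apply tendsto_integral_of_dominated_convergence (fun u => C * (1 + u ^ 2)⁻¹)
        · intro n
          have hcinv : Continuous (fun u : ℝ => (1 + u ^ 2)⁻¹) :=
            Continuous.inv₀ (by fun_prop) (fun u => by positivity)
          exact ((hf.comp (by fun_prop : Continuous fun u : ℝ => t + y n * u)).mul
            hcinv).aestronglyMeasurable
        · exact integrable_inv_one_add_sq.const_mul C
        · intro n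
          filter_upwards with u
          have hpos : (0 : ℝ) < (1 + u ^ 2)⁻¹ := by positivity
          rw [Real.norm_eq_abs, abs_mul, abs_of_pos hpos]
          exact mul_le_mul_of_nonneg_right (hC _) hpos.le
        · filter_upwards with u
          have : Tendsto (fun n => t + y n * u) atTop (𝓝 t) := by
            have : Tendsto (fun n => y n * u) atTop (𝓝 0) := by
              simpa using hy0.mul_const u
            simpa using (tendsto_const_nhds (x := t)).add this
          exact ((hf.tendsto t).comp this).mul_const _
    have : ∫ t, π * f t ∂η₁ = ∫ t, π * f t ∂η₂ :=
      tendsto_nhds_unique ((lim η₁).congr smoothedEq) (lim η₂)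
    simp only [integral_const_mul] at this
    exact mul_left_cancel₀ pi_ne_zero this
  -- Conclude via extensionality with bounded continuous ℝ≥0-valued functions
  apply ext_of_forall_lintegral_eq_of_IsFiniteMeasure
  intro f
  have hcont : Continuous fun x => (f x : ℝ) := NNReal.continuous_coe.comp f.continuous
  have hbdd : ∀ x, |(f x : ℝ)| ≤ nndist f 0 := by
    intro x
    rw [abs_of_nonneg (f x).coe_nonneg]
    exact_mod_cast BoundedContinuousFunction.NNReal.upper_bound f x
  have key := main (fun x => (f x : ℝ)) (nndist f 0) hcont hbdd
  have h1 := BoundedContinuousFunction.toReal_lintegral_coe_eq_integral f η₁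
  have h2 := BoundedContinuousFunction.toReal_lintegral_coe_eq_integral f η₂
  have fin1 := BoundedContinuousFunction.lintegral_lt_top_of_nnreal η₁ f
  have fin2 := BoundedContinuousFunction.lintegral_lt_top_of_nnreal η₂ f
  rw [← ENNReal.toReal_eq_toReal_iff' fin1.ne fin2.ne, h1, h2]
  exact key
end

section
/- Harnack inequality for Poisson integrals on the upper half-plane: for every finite Borel measure η on ℝ with Poisson integral h, and all z, w in the upper half-plane H, one has h(z) ≤ exp(ρ(z,w)) · h(w), where ρ is the hyperbolic distance on H. -/
open MeasureTheory

open Real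

set_option maxHeartbeats 800000

lemma harnack_aux (u v A B d : ℝ) (hu : 0 < u) (hv : 0 < v) (hA : 0 < A) (hB : 0 < B)
    (hd : 0 ≤ d) (hkey : (u * B - v * A) ^ 2 ≤ d ^ 2 * A * B) :
    u * B ≤ Real.exp (2 * arsinh (d / (2 * √(u * v)))) * (v * A) := by
  set s : ℝ := d / (2 * √(u * v)) with hs
  have hs0 : 0 ≤ s := by positivity
  have hE : Real.exp (2 * arsinh s) = (s + √(1 + s ^ 2)) ^ 2 := by
    rw [two_mul, Real.exp_add, Real.exp_arsinh]; ring
  set c : ℝ := √(u * B) with hc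
  set e : ℝ := √(v * A) with he
  have hc0 : 0 < c := Real.sqrt_pos.2 (by positivity)
  have he0 : 0 < e := Real.sqrt_pos.2 (by positivity)
  have hc2 : c ^ 2 = u * B := sq_sqrt (by positivity)
  have he2 : e ^ 2 = v * A := sq_sqrt (by positivity)
  -- 2 s c e = d √(A B)
  have hce : c * e = √(u * v) * √(A * B) := by
    rw [hc, he, ← Real.sqrt_mul (by positivity), ← Real.sqrt_mul (by positivity)]
    congr 1; ring
  have huv0 : 0 < √(u * v) := Real.sqrt_pos.2 (by positivity)
  have h2sce : 2 * s * c * e = d * √(A * B) := by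
    rw [hs, mul_assoc, hce]; field_simp
  have hAB : (d * √(A * B)) ^ 2 = d ^ 2 * A * B := by
    rw [mul_pow, sq_sqrt (by positivity)]; ring
  have hkey2 : c ^ 2 - e ^ 2 ≤ 2 * s * c * e := by
    have h1 : (c ^ 2 - e ^ 2) ^ 2 ≤ (2 * s * c * e) ^ 2 := by
      rw [h2sce, hAB, hc2, he2]; exact hkey
    have h2 : 0 ≤ 2 * s * c * e := by positivity
    nlinarith [sq_nonneg (c ^ 2 - e ^ 2 + 2 * s * c * e)]
  -- main claim: c / e ≤ s + √(1 + s²)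
  have hmain : c / e ≤ s + √(1 + s ^ 2) := by
    rcases le_or_gt (c / e) s with h | h
    · have := Real.sqrt_nonneg (1 + s ^ 2)
      linarith
    · have hq : c / e * e = c := div_mul_cancel₀ c he0.ne'
      have hsq : (c / e - s) ^ 2 ≤ 1 + s ^ 2 := by
        have hexp : (c / e - s) ^ 2 * e ^ 2 = c ^ 2 - 2 * s * c * e + s ^ 2 * e ^ 2 := by
          field_simp; ring
        have h1 : (c / e - s) ^ 2 * e ^ 2 ≤ (1 + s ^ 2) * e ^ 2 := by
          rw [hexp]; nlinarith [hkey2]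
        exact le_of_mul_le_mul_right (by linarith) (by positivity : (0:ℝ) < e ^ 2)
      have : c / e - s ≤ √(1 + s ^ 2) := Real.le_sqrt_of_sq_le hsq
      linarith
  have hsum0 : 0 ≤ s + √(1 + s ^ 2) := by positivity
  have hsq : (c / e) ^ 2 ≤ (s + √(1 + s ^ 2)) ^ 2 :=
    pow_le_pow_left₀ (by positivity) hmain 2
  have hval : (c / e) ^ 2 * (v * A) = u * B := by
    rw [div_pow, hc2, he2]; field_simp
  rw [hE]
  calc u * B = (c / e) ^ 2 * (v * A) := hval.symm
    _ ≤ (s + √(1 + s ^ 2)) ^ 2 * (v * A) :=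
        mul_le_mul_of_nonneg_right hsq (by positivity)

lemma kernel_ident (p u q v x : ℝ) :
    ((p - q) ^ 2 + (u - v) ^ 2) * ((p - x) ^ 2 + u ^ 2) * ((q - x) ^ 2 + v ^ 2)
      = ((q - x) * ((p - x) ^ 2 + u ^ 2) - (p - x) * ((q - x) ^ 2 + v ^ 2)) ^ 2
        + (u * ((q - x) ^ 2 + v ^ 2) - v * ((p - x) ^ 2 + u ^ 2)) ^ 2 := by ring

lemma poissonKernel_pos (z : ℂ) (hz : 0 < z.im) (x : ℝ) : 0 < poissonKernelUHP z x := by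
  unfold poissonKernelUHP; positivity

lemma poissonKernel_le (z w : UpperHalfPlane) (x : ℝ) :
    poissonKernelUHP (z : ℂ) x ≤ Real.exp (dist z w) * poissonKernelUHP (w : ℂ) x := by
  have hu0 : 0 < (z : ℂ).im := z.im_pos
  have hv0 : 0 < (w : ℂ).im := w.im_pos
  have hA0 : 0 < ((z : ℂ).re - x) ^ 2 + (z : ℂ).im ^ 2 := by positivity
  have hB0 : 0 < ((w : ℂ).re - x) ^ 2 + (w : ℂ).im ^ 2 := by positivity
  have hdsq : dist (z : ℂ) (w : ℂ) ^ 2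
      = ((z : ℂ).re - (w : ℂ).re) ^ 2 + ((z : ℂ).im - (w : ℂ).im) ^ 2 := by
    rw [Complex.dist_eq_re_im, sq_sqrt (by positivity)]
  have hkey : ((z : ℂ).im * (((w : ℂ).re - x) ^ 2 + (w : ℂ).im ^ 2)
        - (w : ℂ).im * (((z : ℂ).re - x) ^ 2 + (z : ℂ).im ^ 2)) ^ 2
      ≤ dist (z : ℂ) (w : ℂ) ^ 2 * (((z : ℂ).re - x) ^ 2 + (z : ℂ).im ^ 2)
        * (((w : ℂ).re - x) ^ 2 + (w : ℂ).im ^ 2) := by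
    rw [hdsq, kernel_ident (z : ℂ).re (z : ℂ).im (w : ℂ).re (w : ℂ).im x]
    linarith [sq_nonneg (((w : ℂ).re - x) * (((z : ℂ).re - x) ^ 2 + (z : ℂ).im ^ 2)
      - ((z : ℂ).re - x) * (((w : ℂ).re - x) ^ 2 + (w : ℂ).im ^ 2))]
  have haux := harnack_aux ((z : ℂ).im) ((w : ℂ).im)
    (((z : ℂ).re - x) ^ 2 + (z : ℂ).im ^ 2) (((w : ℂ).re - x) ^ 2 + (w : ℂ).im ^ 2)
    (dist (z : ℂ) (w : ℂ)) hu0 hv0 hA0 hB0 dist_nonneg hkey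
  have hdist : dist z w = 2 * arsinh (dist (z : ℂ) (w : ℂ) / (2 * √((z : ℂ).im * (w : ℂ).im))) := by
    rw [UpperHalfPlane.dist_eq]
    simp [UpperHalfPlane.coe_im]
  rw [hdist]
  unfold poissonKernelUHP
  rw [← mul_div_assoc, div_le_div_iff₀ hA0 hB0]
  calc (z : ℂ).im * (((w : ℂ).re - x) ^ 2 + (w : ℂ).im ^ 2)
      ≤ Real.exp (2 * arsinh (dist (z : ℂ) (w : ℂ) / (2 * √((z : ℂ).im * (w : ℂ).im))))
        * ((w : ℂ).im * (((z : ℂ).re - x) ^ 2 + (z : ℂ).im ^ 2)) := haux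
    _ = Real.exp (2 * arsinh (dist (z : ℂ) (w : ℂ) / (2 * √((z : ℂ).im * (w : ℂ).im))))
        * (w : ℂ).im * (((z : ℂ).re - x) ^ 2 + (z : ℂ).im ^ 2) := by ring

lemma poissonKernel_integrable (η : Measure ℝ) [IsFiniteMeasure η] (z : UpperHalfPlane) :
    Integrable (fun x => poissonKernelUHP (z : ℂ) x) η := by
  have him : 0 < (z : ℂ).im := z.im_pos
  have hcont : Continuous (fun x => poissonKernelUHP (z : ℂ) x) := by
    apply continuous_const.div
    · fun_prop
    · intro x; positivity
  apply Integrable.mono' (integrable_const (1 / (z : ℂ).im)) hcont.aestronglyMeasurable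
  filter_upwards with x
  rw [Real.norm_eq_abs, abs_of_pos (poissonKernel_pos _ him x)]
  unfold poissonKernelUHP
  rw [div_le_div_iff₀ (by positivity) him]
  nlinarith [sq_nonneg ((z : ℂ).re - x), sq_nonneg ((z : ℂ).im - 1)]

theorem poisson_integral_harnack
    (η : Measure ℝ) [IsFiniteMeasure η] (z w : UpperHalfPlane) :
    poissonIntegral η (z : ℂ) ≤ Real.exp (dist z w) * poissonIntegral η (w : ℂ) := by
  unfold poissonIntegral
  rw [← integral_const_mul]
  exact integral_mono (poissonKernel_integrable η z)
    ((poissonKernel_integrable η w).const_mul _) (fun x => poissonKernel_le z w x)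
end

section
/- Nontangential convergence of normalized Poisson integrals of continuous densities: let f : ℝ → [0,∞) be bounded, continuous, and Lebesgue-integrable. Then for every x₀ ∈ ℝ and every aperture c > 0, (1/π)·∫_ℝ P(z,x) f(x) dx → f(x₀) as z → x₀ with z in the cone Γ_c(x₀). -/
open MeasureTheory Filter Topology Real

/-- The Poisson kernel of the upper half-plane. -/
noncomputable def upperHalfPlanePoissonKernel (z : ℂ) (x : ℝ) : ℝ :=
  z.im / ((z.re - x) ^ 2 + z.im ^ 2)

lemma pk_pos {z : ℂ} (hz : 0 < z.im) (x : ℝ) : 0 < upperHalfPlanePoissonKernel z x := by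
  apply div_pos hz
  positivity

lemma pk_eq {z : ℂ} (hz : 0 < z.im) (x : ℝ) :
    upperHalfPlanePoissonKernel z x = z.im⁻¹ * (1 + ((x - z.re) / z.im) ^ 2)⁻¹ := by
  unfold upperHalfPlanePoissonKernel
  rw [div_pow]
  field_simp
  ring

lemma pk_integrable {z : ℂ} (hz : 0 < z.im) : Integrable (upperHalfPlanePoissonKernel z) := by
  have h1 : Integrable (fun x : ℝ => (1 + (x / z.im) ^ 2)⁻¹) := by
    have := integrable_inv_one_add_sq.comp_div hz.ne'
    simpa using this
  have h2 : Integrable (fun x : ℝ => (1 + ((x - z.re) / z.im) ^ 2)⁻¹) :=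
    h1.comp_sub_right z.re
  have := (h2.const_mul z.im⁻¹)
  exact this.congr (Eventually.of_forall fun x => (pk_eq hz x).symm)

lemma pk_integral {z : ℂ} (hz : 0 < z.im) : ∫ x, upperHalfPlanePoissonKernel z x = π := by
  have h := MeasureTheory.Measure.integral_comp_div
    (fun t : ℝ => (1 + t ^ 2)⁻¹) z.im
  calc ∫ x, upperHalfPlanePoissonKernel z x
      = ∫ x, z.im⁻¹ * (1 + ((x - z.re) / z.im) ^ 2)⁻¹ := by
        congr 1; ext x; exact pk_eq hz x
    _ = z.im⁻¹ * ∫ x, (1 + ((x - z.re) / z.im) ^ 2)⁻¹ := integral_const_mul _ _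
    _ = z.im⁻¹ * ∫ x, (1 + (x / z.im) ^ 2)⁻¹ := by
        rw [integral_sub_right_eq_self (fun x : ℝ => (1 + (x / z.im) ^ 2)⁻¹) z.re]
    _ = z.im⁻¹ * (|z.im| • ∫ t, (1 + t ^ 2)⁻¹) := by rw [h]
    _ = π := by
        rw [integral_univ_inv_one_add_sq, abs_of_pos hz, smul_eq_mul]
        field_simp

lemma pk_cont {z : ℂ} (hz : 0 < z.im) : Continuous (upperHalfPlanePoissonKernel z) := by
  apply continuous_const.div
  · exact ((continuous_const.sub continuous_id).pow 2).add continuous_const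
  · intro x
    positivity

lemma pk_le {z : ℂ} (hz : 0 < z.im) (x : ℝ) : upperHalfPlanePoissonKernel z x ≤ z.im⁻¹ := by
  unfold upperHalfPlanePoissonKernel
  rw [div_le_iff₀ (by positivity)]
  rw [inv_mul_eq_div, le_div_iff₀ hz]
  nlinarith [sq_nonneg (z.re - x)]

set_option maxHeartbeats 1000000 in
theorem nontangential_convergence_continuous_density
    (f : ℝ → ℝ) (hf_nonneg : 0 ≤ f) (hf_bdd : ∃ B : ℝ, ∀ x, f x ≤ B)
    (hf_cont : Continuous f) (hf_int : Integrable f) :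
    ∀ (x₀ : ℝ), ∀ c > (0 : ℝ),
      Tendsto (fun z : ℂ => (1 / π) * ∫ x, upperHalfPlanePoissonKernel z x * f x)
        (𝓝[cone x₀ c] (x₀ : ℂ)) (𝓝 (f x₀)) := by
  obtain ⟨B, hB⟩ := hf_bdd
  intro x₀ c hc
  have hπ : (0:ℝ) < π := pi_pos
  set B1 : ℝ := B + 1 with hB1def
  have hB1 : 0 < B1 := by
    have h1 : (0:ℝ) ≤ f 0 := hf_nonneg 0
    have h2 := hB 0
    simp only [hB1def]; linarith
  have hfB1 : ∀ x, |f x - f x₀| ≤ B1 := by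
    intro x
    have h1 : (0:ℝ) ≤ f x := hf_nonneg x
    have h2 : (0:ℝ) ≤ f x₀ := hf_nonneg x₀
    have h3 := hB x; have h4 := hB x₀
    rw [abs_le]; constructor <;> simp only [hB1def] <;> linarith
  rw [Metric.tendsto_nhdsWithin_nhds]
  intro ε hε
  obtain ⟨δ, hδ, hcont⟩ := Metric.continuousAt_iff.mp (hf_cont.continuousAt (x := x₀))
    (ε/2) (by linarith)
  refine ⟨min (δ/(2*c)) (ε*δ/(16*B1)), by positivity, ?_⟩
  rintro z ⟨hzim, hzcone⟩ hzd
  -- basic position facts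
  have hyd : z.im < min (δ/(2*c)) (ε*δ/(16*B1)) := by
    refine lt_of_le_of_lt ?_ hzd
    rw [Complex.dist_eq]
    calc z.im = (z - (x₀:ℂ)).im := by simp
      _ ≤ |(z - (x₀:ℂ)).im| := le_abs_self _
      _ ≤ ‖z - (x₀:ℂ)‖ := Complex.abs_im_le_norm _
  have hy1 : z.im < δ/(2*c) := lt_of_lt_of_le hyd (min_le_left _ _)
  have hy2 : z.im < ε*δ/(16*B1) := lt_of_lt_of_le hyd (min_le_right _ _)
  have hre : |z.re - x₀| ≤ δ/2 := by
    calc |z.re - x₀| ≤ c * z.im := hzcone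
      _ ≤ c * (δ/(2*c)) := by nlinarith
      _ = δ/2 := by field_simp
  set w : ℂ := ⟨x₀, δ⟩ with hwdef
  have hwim : w.im = δ := rfl
  have hwre : w.re = x₀ := rfl
  -- integrability
  have hPz : Integrable (upperHalfPlanePoissonKernel z) := pk_integrable hzim
  have hPw : Integrable (upperHalfPlanePoissonKernel w) := pk_integrable (hwim ▸ hδ)
  have hPzf : Integrable (fun x => upperHalfPlanePoissonKernel z x * f x) :=
    Integrable.bdd_mul (c := z.im⁻¹) hf_int (pk_cont hzim).aestronglyMeasurable
      (Eventually.of_forall fun x => by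
        rw [Real.norm_eq_abs, abs_of_nonneg (pk_pos hzim x).le]; exact pk_le hzim x)
  have hG : Integrable (fun x => upperHalfPlanePoissonKernel z x * |f x - f x₀|) := by
    have := Integrable.bdd_mul (f := fun x => |f x - f x₀|) (c := B1) hPz
      ((hf_cont.sub continuous_const).abs).aestronglyMeasurable
      (Eventually.of_forall fun x => by rw [Real.norm_eq_abs, abs_abs]; exact hfB1 x)
    exact this.congr (Eventually.of_forall fun x => by simp [mul_comm])
  -- key identity
  have hkey : ∫ x, upperHalfPlanePoissonKernel z x * (f x - f x₀)
      = (∫ x, upperHalfPlanePoissonKernel z x * f x) - f x₀ * π := by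
    have heq : (fun x => upperHalfPlanePoissonKernel z x * (f x - f x₀))
        = fun x => upperHalfPlanePoissonKernel z x * f x - f x₀ * upperHalfPlanePoissonKernel z x :=
      funext fun x => by ring
    rw [heq, integral_sub hPzf (hPz.const_mul (f x₀)), integral_const_mul,
      pk_integral hzim]
  -- kernel comparison on the far set
  have hker : ∀ x : ℝ, δ ≤ |x - x₀| →
      upperHalfPlanePoissonKernel z x ≤ 8 * z.im / δ * upperHalfPlanePoissonKernel w x := by
    intro x hx
    have hD1 : (0:ℝ) < (z.re - x)^2 + z.im^2 := by positivity
    have hD2 : (0:ℝ) < (x₀ - x)^2 + δ^2 := by positivity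
    have h8 : 8 * z.im / δ * upperHalfPlanePoissonKernel w x = 8 * z.im / ((x₀ - x)^2 + δ^2) := by
      unfold upperHalfPlanePoissonKernel
      rw [hwim, hwre]
      field_simp
    rw [h8]
    unfold upperHalfPlanePoissonKernel
    rw [div_le_div_iff₀ hD1 hD2]
    have hsq1 : δ^2 ≤ (x - x₀)^2 := by
      have := pow_le_pow_left₀ hδ.le hx 2
      rwa [sq_abs] at this
    have htri : |x - x₀| ≤ |x - z.re| + |z.re - x₀| := abs_sub_le _ _ _
    have hhalf : |x - x₀|/2 ≤ |x - z.re| := by linarith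
    have hsq2 : (x - x₀)^2 / 4 ≤ (z.re - x)^2 := by
      have h1 : (|x - x₀|/2)^2 ≤ |x - z.re|^2 :=
        pow_le_pow_left₀ (by positivity) hhalf 2
      rw [sq_abs] at h1
      nlinarith [sq_abs (x - x₀)]
    nlinarith [hzim, sq_nonneg z.im]
  -- split the integral
  set s : Set ℝ := Metric.ball x₀ δ with hsdef
  have hsm : MeasurableSet s := measurableSet_ball
  have hsplit : ∫ x, upperHalfPlanePoissonKernel z x * |f x - f x₀|
      = (∫ x in s, upperHalfPlanePoissonKernel z x * |f x - f x₀|)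
        + ∫ x in sᶜ, upperHalfPlanePoissonKernel z x * |f x - f x₀| :=
    (integral_add_compl hsm hG).symm
  -- near estimate
  have hnear : ∫ x in s, upperHalfPlanePoissonKernel z x * |f x - f x₀| ≤ π * (ε/2) := by
    have h1 : ∫ x in s, upperHalfPlanePoissonKernel z x * |f x - f x₀|
        ≤ ∫ x in s, upperHalfPlanePoissonKernel z x * (ε/2) := by
      refine setIntegral_mono_on hG.integrableOn ((hPz.mul_const (ε/2)).integrableOn)
        hsm (fun x hx => ?_)
      have hxd : dist x x₀ < δ := Metric.mem_ball.mp hx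
      have := hcont hxd
      rw [Real.dist_eq] at this
      exact mul_le_mul_of_nonneg_left this.le (pk_pos hzim x).le
    have h2 : ∫ x in s, upperHalfPlanePoissonKernel z x * (ε/2) ≤ π * (ε/2) := by
      rw [integral_mul_const]
      have h3 : ∫ x in s, upperHalfPlanePoissonKernel z x ≤ ∫ x, upperHalfPlanePoissonKernel z x :=
        setIntegral_le_integral hPz (Eventually.of_forall fun x => (pk_pos hzim x).le)
      rw [pk_integral hzim] at h3
      nlinarith
    linarith
  -- far estimate
  have hfar : ∫ x in sᶜ, upperHalfPlanePoissonKernel z x * |f x - f x₀|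
      ≤ 8 * z.im / δ * B1 * π := by
    have h1 : ∫ x in sᶜ, upperHalfPlanePoissonKernel z x * |f x - f x₀|
        ≤ ∫ x in sᶜ, (8 * z.im / δ * B1) * upperHalfPlanePoissonKernel w x := by
      refine setIntegral_mono_on hG.integrableOn
        ((hPw.const_mul _).integrableOn) hsm.compl (fun x hx => ?_)
      have hxx : δ ≤ |x - x₀| := by
        simp only [hsdef, Set.mem_compl_iff, Metric.mem_ball, Real.dist_eq, not_lt] at hx
        exact hx
      calc upperHalfPlanePoissonKernel z x * |f x - f x₀|
          ≤ upperHalfPlanePoissonKernel z x * B1 :=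
            mul_le_mul_of_nonneg_left (hfB1 x) (pk_pos hzim x).le
        _ ≤ (8 * z.im / δ * upperHalfPlanePoissonKernel w x) * B1 :=
            mul_le_mul_of_nonneg_right (hker x hxx) hB1.le
        _ = (8 * z.im / δ * B1) * upperHalfPlanePoissonKernel w x := by ring
    have h2 : ∫ x in sᶜ, (8 * z.im / δ * B1) * upperHalfPlanePoissonKernel w x
        ≤ 8 * z.im / δ * B1 * π := by
      rw [integral_const_mul]
      have h3 : ∫ x in sᶜ, upperHalfPlanePoissonKernel w x ≤ ∫ x, upperHalfPlanePoissonKernel w x :=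
        setIntegral_le_integral hPw
          (Eventually.of_forall fun x => (pk_pos (hwim ▸ hδ) x).le)
      rw [pk_integral (hwim ▸ hδ)] at h3
      have hcpos : (0:ℝ) ≤ 8 * z.im / δ * B1 := by positivity
      nlinarith
    linarith
  -- combine
  rw [Real.dist_eq]
  have hrw : (1/π) * (∫ x, upperHalfPlanePoissonKernel z x * f x) - f x₀
      = (1/π) * ∫ x, upperHalfPlanePoissonKernel z x * (f x - f x₀) := by
    rw [hkey]
    field_simp
  rw [hrw, abs_mul, abs_of_nonneg (by positivity : (0:ℝ) ≤ 1/π)]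
  have habs : |∫ x, upperHalfPlanePoissonKernel z x * (f x - f x₀)|
      ≤ ∫ x, upperHalfPlanePoissonKernel z x * |f x - f x₀| := by
    have h := norm_integral_le_integral_norm (μ := volume)
      (fun x => upperHalfPlanePoissonKernel z x * (f x - f x₀))
    rw [Real.norm_eq_abs] at h
    refine h.trans_eq ?_
    congr 1
    ext x
    rw [Real.norm_eq_abs, abs_mul, abs_of_nonneg (pk_pos hzim x).le]
  have htot : ∫ x, upperHalfPlanePoissonKernel z x * |f x - f x₀|
      ≤ π * (ε/2) + 8 * z.im / δ * B1 * π := by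
    rw [hsplit]; linarith
  have hfin : (1/π) * (π * (ε/2) + 8 * z.im / δ * B1 * π) < ε := by
    rw [show (1/π) * (π * (ε/2) + 8 * z.im / δ * B1 * π)
        = ε/2 + 8 * z.im / δ * B1 by field_simp]
    have : 8 * z.im / δ * B1 < ε/2 := by
      rw [div_mul_eq_mul_div, div_lt_iff₀ hδ]
      calc 8 * z.im * B1 < 8 * (ε*δ/(16*B1)) * B1 := by nlinarith
        _ = ε/2 * δ := by field_simp; ring
    linarith
  calc (1/π) * |∫ x, upperHalfPlanePoissonKernel z x * (f x - f x₀)|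
      ≤ (1/π) * (π * (ε/2) + 8 * z.im / δ * B1 * π) :=
        mul_le_mul_of_nonneg_left (habs.trans htot) (by positivity)
    _ < ε := hfin
end

section
/- Fatou theorem for Poisson integrals of integrable densities: let f : ℝ → [0,∞) be Lebesgue-integrable and let h(z) = ∫_ℝ P(z,x) f(x) dx. Then for Lebesgue-almost every x₀ ∈ ℝ and every aperture c > 0, (1/π)·h(z) → f(x₀) as z → x₀ with z in the cone Γ_c(x₀). -/
open MeasureTheory Filter Topology Real

lemma kernel_eq (t : ℝ) (ht : 0 < t) :
    (fun x : ℝ => t / (x ^ 2 + t ^ 2)) = fun x : ℝ => t⁻¹ * (1 + (x / t) ^ 2)⁻¹ := by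
  funext x; field_simp; ring

lemma kernel_integrable0 (t : ℝ) (ht : 0 < t) :
    Integrable (fun x : ℝ => t / (x ^ 2 + t ^ 2)) := by
  rw [kernel_eq t ht]
  exact (integrable_inv_one_add_sq.comp_div ht.ne').const_mul _

lemma kernel_integral0 (t : ℝ) (ht : 0 < t) :
    ∫ x : ℝ, t / (x ^ 2 + t ^ 2) = π := by
  rw [kernel_eq t ht]
  rw [integral_const_mul, MeasureTheory.Measure.integral_comp_div (fun u : ℝ => (1 + u ^ 2)⁻¹) t,
    integral_univ_inv_one_add_sq, abs_of_pos ht, smul_eq_mul]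
  field_simp

lemma kernel_cont (t s : ℝ) (ht : 0 < t) : Continuous (fun x : ℝ => t / ((s - x) ^ 2 + t ^ 2)) := by
  apply Continuous.div continuous_const (by continuity)
  intro x; positivity

lemma m_cont (t : ℝ) (ht : 0 < t) : Continuous (fun r : ℝ => 2*t*r/((r^2+t^2)^2)) := by
  apply Continuous.div (by continuity) (by continuity)
  intro r; positivity

lemma ftc_m (t δ a : ℝ) (ht : 0 < t) (ha : 0 ≤ a) (haδ : a ≤ δ) :
    ∫ r in a..δ, 2*t*r/((r^2+t^2)^2) = t/(a^2+t^2) - t/(δ^2+t^2) := by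
  have h : ∀ r ∈ Set.uIcc a δ, HasDerivAt (fun r : ℝ => -(t * (r^2+t^2)⁻¹))
      (2*t*r/((r^2+t^2)^2)) r := by
    intro r _
    have h1 : HasDerivAt (fun r : ℝ => r^2+t^2) (2*r) r := by
      simpa using (hasDerivAt_pow 2 r).add_const (t^2)
    have hne : (r^2+t^2) ≠ 0 := by positivity
    have := ((h1.inv hne).const_mul t).neg
    refine this.congr_deriv ?_
    ring
  rw [intervalIntegral.integral_eq_sub_of_hasDerivAt h ((m_cont t ht).intervalIntegrable a δ)]
  ring

lemma near_bound (f : ℝ → ℝ) (hfm : Measurable f) (hf_int : Integrable f)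
    (x₀ t δ ε' : ℝ) (ht : 0 < t) (hδ : 0 < δ) (hε' : 0 ≤ ε')
    (hL : ∀ r, 0 < r → r ≤ δ → (∫ y in Metric.closedBall x₀ r, |f y - f x₀|) ≤ ε' * r) :
    ∫ x in Metric.closedBall x₀ δ, t/((x₀ - x)^2 + t^2) * |f x - f x₀| ≤ ε'/2 + 2*π*ε' := by
  set φ : ℝ → ℝ := fun x => |f x - f x₀| with hφdef
  have hφm : Measurable φ := (hfm.sub measurable_const).abs
  have hφ0 : ∀ x, 0 ≤ φ x := fun x => abs_nonneg _
  set ψ : ℝ → ENNReal := fun x => ENNReal.ofReal (φ x) with hψdef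
  have hψm : Measurable ψ := ENNReal.measurable_ofReal.comp hφm
  set m : ℝ → ℝ := fun r => 2*t*r/((r^2+t^2)^2) with hmdef
  have hφint : ∀ r : ℝ, IntegrableOn φ (Metric.closedBall x₀ r) := by
    intro r
    apply Integrable.abs
    exact hf_int.integrableOn.sub (integrableOn_const measure_closedBall_lt_top.ne)
  have hψint : ∀ r, 0 < r → r ≤ δ →
      (∫⁻ x in Metric.closedBall x₀ r, ψ x) ≤ ENNReal.ofReal (ε' * r) := by
    intro r hr hrδ
    rw [← ofReal_integral_eq_lintegral_ofReal (hφint r) (ae_of_all _ hφ0)]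
    exact ENNReal.ofReal_le_ofReal (hL r hr hrδ)
  set S : Set (ℝ × ℝ) := {p | |p.1 - x₀| < p.2 ∧ p.2 ≤ δ} with hSdef
  have hSm : MeasurableSet S := by
    have h1 : IsOpen {p : ℝ × ℝ | |p.1 - x₀| < p.2} := isOpen_lt (by continuity) continuous_snd
    have h2 : IsClosed {p : ℝ × ℝ | p.2 ≤ δ} := isClosed_le continuous_snd continuous_const
    exact h1.measurableSet.inter h2.measurableSet
  set F : ℝ → ℝ → ENNReal :=
    fun x r => S.indicator (fun p : ℝ × ℝ => ENNReal.ofReal (m p.2)) (x, r) * ψ x with hFdef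
  have hFm : Measurable (Function.uncurry F) := by
    apply Measurable.mul
    · exact Measurable.indicator
        (ENNReal.measurable_ofReal.comp ((m_cont t ht).measurable.comp measurable_snd)) hSm
    · exact hψm.comp measurable_fst
  have hFx : ∀ x, (∫⁻ r, F x r)
      = (∫⁻ r in Set.Ioc (|x - x₀|) δ, ENNReal.ofReal (m r)) * ψ x := by
    intro x
    have hind : (fun r => S.indicator (fun p : ℝ × ℝ => ENNReal.ofReal (m p.2)) (x, r))
        = (Set.Ioc (|x - x₀|) δ).indicator (fun r => ENNReal.ofReal (m r)) := by
      funext r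
      simp only [Set.indicator, hSdef, Set.mem_setOf_eq, Set.mem_Ioc]
    have : F x = fun r =>
        (Set.Ioc (|x - x₀|) δ).indicator (fun r => ENNReal.ofReal (m r)) r * ψ x := by
      funext r
      rw [hFdef]
      simp only
      rw [← hind]
    rw [this, lintegral_mul_const' _ _ ENNReal.ofReal_ne_top,
      lintegral_indicator measurableSet_Ioc]
  have hIoc : ∀ a : ℝ, 0 ≤ a → a ≤ δ →
      (∫⁻ r in Set.Ioc a δ, ENNReal.ofReal (m r))
        = ENNReal.ofReal (t/(a^2+t^2) - t/(δ^2+t^2)) := by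
    intro a ha haδ
    rw [← ofReal_integral_eq_lintegral_ofReal ((m_cont t ht).intervalIntegrable a δ).1]
    · congr 1
      rw [← intervalIntegral.integral_of_le haδ, ftc_m t δ a ht ha haδ]
    · apply (ae_restrict_iff' measurableSet_Ioc).2
      apply ae_of_all
      intro r hr
      have h0r : (0:ℝ) ≤ r := ha.trans hr.1.le
      simp only [Pi.zero_apply]
      positivity
  have hmono : ∀ a : ℝ, 0 ≤ a → a ≤ δ → t/(δ^2+t^2) ≤ t/(a^2+t^2) := by
    intro a ha haδ
    apply div_le_div_of_nonneg_left ht.le (by positivity)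
    nlinarith
  have hkey : ∀ x ∈ Metric.closedBall x₀ δ,
      ENNReal.ofReal (t/((x₀ - x)^2 + t^2) * φ x)
        = ENNReal.ofReal (t/(δ^2+t^2)) * ψ x + ∫⁻ r, F x r := by
    intro x hx
    have hxd : |x - x₀| ≤ δ := by rwa [Metric.mem_closedBall, Real.dist_eq] at hx
    have ha : (0:ℝ) ≤ |x - x₀| := abs_nonneg _
    rw [hFx x, hIoc _ ha hxd]
    have habs : (x₀ - x)^2 = |x - x₀|^2 := by rw [sq_abs]; ring
    have hsplit : t/((x₀ - x)^2 + t^2)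
        = t/(δ^2+t^2) + (t/(|x - x₀|^2+t^2) - t/(δ^2+t^2)) := by
      rw [habs]; ring
    rw [ENNReal.ofReal_mul (by positivity), hsplit,
      ENNReal.ofReal_add (by positivity) (sub_nonneg.2 (hmono _ ha hxd)), add_mul]
  have hclaimB : ∀ r : ℝ, (∫⁻ x, F x r) ≤ ENNReal.ofReal (ε' * (2*t/(r^2+t^2))) := by
    intro r
    by_cases hrδ : r ≤ δ
    · by_cases hr0 : 0 < r
      · have hFr : (fun x => F x r)
            = fun x => (Metric.ball x₀ r).indicator
              (fun _ => ENNReal.ofReal (m r)) x * ψ x := by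
          funext x
          rw [hFdef]
          simp only [Set.indicator, hSdef, Set.mem_setOf_eq, Metric.mem_ball, Real.dist_eq,
            hrδ, and_true]
        have hball : (∫⁻ x in Metric.ball x₀ r, ψ x) ≤ ENNReal.ofReal (ε' * r) :=
          le_trans (lintegral_mono_set Metric.ball_subset_closedBall) (hψint r hr0 hrδ)
        have hmr0 : 0 ≤ m r := by
          rw [hmdef]; positivity
        have hkey2 : m r * (ε' * r) ≤ ε' * (2*t/(r^2+t^2)) := by
          have hD : (0:ℝ) < r^2+t^2 := by positivity
          have hk : m r * r ≤ 2*t/(r^2+t^2) := by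
            rw [hmdef]
            simp only
            rw [div_mul_eq_mul_div, div_le_div_iff₀ (by positivity) hD]
            nlinarith [mul_nonneg (mul_nonneg ht.le hD.le) (sq_nonneg t)]
          calc m r * (ε' * r) = ε' * (m r * r) := by ring
            _ ≤ ε' * (2*t/(r^2+t^2)) := mul_le_mul_of_nonneg_left hk hε'
        calc ∫⁻ x, F x r
            = ∫⁻ x, (Metric.ball x₀ r).indicator (fun _ => ENNReal.ofReal (m r)) x * ψ x := by
              rw [hFr]
          _ = ∫⁻ x, (Metric.ball x₀ r).indicator (fun x => ENNReal.ofReal (m r) * ψ x) x := by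
              congr 1
              funext x
              by_cases hx : x ∈ Metric.ball x₀ r
              · simp [Set.indicator_of_mem hx]
              · simp [Set.indicator_of_notMem hx]
          _ = ∫⁻ x in Metric.ball x₀ r, ENNReal.ofReal (m r) * ψ x :=
              lintegral_indicator measurableSet_ball _
          _ = ENNReal.ofReal (m r) * ∫⁻ x in Metric.ball x₀ r, ψ x :=
              lintegral_const_mul' _ _ ENNReal.ofReal_ne_top
          _ ≤ ENNReal.ofReal (m r) * ENNReal.ofReal (ε' * r) := mul_le_mul_right hball _
          _ = ENNReal.ofReal (m r * (ε' * r)) := (ENNReal.ofReal_mul hmr0).symm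
          _ ≤ ENNReal.ofReal (ε' * (2*t/(r^2+t^2))) := ENNReal.ofReal_le_ofReal hkey2
      · have hz : ∀ x, F x r = 0 := by
          intro x
          rw [hFdef]
          simp only
          rw [Set.indicator_of_notMem, zero_mul]
          rintro ⟨h1, -⟩
          exact hr0 (lt_of_le_of_lt (abs_nonneg _) h1)
        simp only [hz, lintegral_zero]
        exact zero_le
    · have hz : ∀ x, F x r = 0 := by
        intro x
        rw [hFdef]
        simp only
        rw [Set.indicator_of_notMem, zero_mul]
        rintro ⟨-, h2⟩
        exact hrδ h2
      simp only [hz, lintegral_zero]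
      exact zero_le
  have hRHSeq : (fun r : ℝ => ε' * (2*t/(r^2+t^2))) = fun r => (ε'*2) * (t/(r^2+t^2)) := by
    funext r; ring
  have hRHS : (∫⁻ r : ℝ, ENNReal.ofReal (ε' * (2*t/(r^2+t^2)))) = ENNReal.ofReal (2*π*ε') := by
    have hint : Integrable (fun r : ℝ => ε' * (2*t/(r^2+t^2))) := by
      rw [hRHSeq]; exact (kernel_integrable0 t ht).const_mul _
    rw [← ofReal_integral_eq_lintegral_ofReal hint (ae_of_all _ (fun r => by positivity))]
    congr 1
    rw [hRHSeq, integral_const_mul, kernel_integral0 t ht]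
    ring
  have hterm1 : ENNReal.ofReal (t/(δ^2+t^2)) * (∫⁻ x in Metric.closedBall x₀ δ, ψ x)
      ≤ ENNReal.ofReal (ε'/2) := by
    calc ENNReal.ofReal (t/(δ^2+t^2)) * (∫⁻ x in Metric.closedBall x₀ δ, ψ x)
        ≤ ENNReal.ofReal (t/(δ^2+t^2)) * ENNReal.ofReal (ε' * δ) :=
          mul_le_mul_right (hψint δ hδ le_rfl) _
      _ = ENNReal.ofReal (t/(δ^2+t^2) * (ε' * δ)) := (ENNReal.ofReal_mul (by positivity)).symm
      _ ≤ ENNReal.ofReal (ε'/2) := by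
          apply ENNReal.ofReal_le_ofReal
          have h2 : t*δ/(δ^2+t^2) ≤ 1/2 := by
            rw [div_le_iff₀ (by positivity)]
            nlinarith [sq_nonneg (t-δ)]
          have : t/(δ^2+t^2) * (ε' * δ) = ε' * (t*δ/(δ^2+t^2)) := by ring
          rw [this]
          calc ε' * (t*δ/(δ^2+t^2)) ≤ ε' * (1/2) := mul_le_mul_of_nonneg_left h2 hε'
            _ = ε'/2 := by ring
  have hmeas : AEStronglyMeasurable (fun x => t/((x₀ - x)^2 + t^2) * φ x)
      (volume.restrict (Metric.closedBall x₀ δ)) := by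
    apply Measurable.aestronglyMeasurable
    exact ((kernel_cont t x₀ ht).measurable.mul hφm)
  rw [integral_eq_lintegral_of_nonneg_ae (ae_of_all _ (fun x => by positivity)) hmeas]
  apply ENNReal.toReal_le_of_le_ofReal (by positivity)
  calc ∫⁻ x in Metric.closedBall x₀ δ, ENNReal.ofReal (t/((x₀ - x)^2 + t^2) * φ x)
      = ∫⁻ x in Metric.closedBall x₀ δ, (ENNReal.ofReal (t/(δ^2+t^2)) * ψ x + ∫⁻ r, F x r) :=
        setLIntegral_congr_fun measurableSet_closedBall hkey
    _ = ENNReal.ofReal (t/(δ^2+t^2)) * (∫⁻ x in Metric.closedBall x₀ δ, ψ x)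
        + ∫⁻ x in Metric.closedBall x₀ δ, ∫⁻ r, F x r := by
        rw [lintegral_add_left (hψm.const_mul _), lintegral_const_mul' _ _ ENNReal.ofReal_ne_top]
    _ ≤ ENNReal.ofReal (ε'/2) + ∫⁻ x, ∫⁻ r, F x r :=
        add_le_add hterm1 (setLIntegral_le_lintegral _ _)
    _ = ENNReal.ofReal (ε'/2) + ∫⁻ r, ∫⁻ x, F x r := by
        rw [lintegral_lintegral_swap hFm.aemeasurable]
    _ ≤ ENNReal.ofReal (ε'/2) + ENNReal.ofReal (2*π*ε') := by
        apply add_le_add_right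
        rw [← hRHS]
        exact lintegral_mono hclaimB
    _ = ENNReal.ofReal (ε'/2 + 2*π*ε') := by
        rw [ENNReal.ofReal_add (by positivity) (by positivity)]

lemma kernel_integrable (t s : ℝ) (ht : 0 < t) :
    Integrable (fun x : ℝ => t / ((s - x) ^ 2 + t ^ 2)) := by
  have h : (fun x : ℝ => t / ((s - x) ^ 2 + t ^ 2))
      = fun x : ℝ => (fun u : ℝ => t / (u ^ 2 + t ^ 2)) (x - s) := by
    funext x; rw [show (s - x) ^ 2 = (x - s) ^ 2 by ring]
  rw [h]
  exact (kernel_integrable0 t ht).comp_sub_right s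

lemma kernel_integral (t s : ℝ) (ht : 0 < t) :
    ∫ x : ℝ, t / ((s - x) ^ 2 + t ^ 2) = π := by
  have h : (fun x : ℝ => t / ((s - x) ^ 2 + t ^ 2))
      = fun x : ℝ => (fun u : ℝ => t / (u ^ 2 + t ^ 2)) (x - s) := by
    funext x; rw [show (s - x) ^ 2 = (x - s) ^ 2 by ring]
  rw [h, integral_sub_right_eq_self (fun u : ℝ => t / (u ^ 2 + t ^ 2)) s]
  exact kernel_integral0 t ht

lemma kernel_mul_integrable (t s : ℝ) (ht : 0 < t) (g : ℝ → ℝ) (hg : Integrable g) :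
    Integrable (fun x => t / ((s - x) ^ 2 + t ^ 2) * g x) := by
  apply Integrable.bdd_mul (c := t⁻¹) hg (kernel_cont t s ht).aestronglyMeasurable
  refine ae_of_all _ fun x => ?_
  rw [Real.norm_eq_abs, abs_of_nonneg (by positivity)]
  calc t / ((s - x) ^ 2 + t ^ 2) ≤ t / t ^ 2 :=
        div_le_div_of_nonneg_left ht.le (by positivity) (le_add_of_nonneg_left (sq_nonneg _))
    _ = t⁻¹ := by rw [sq, ← div_div, div_self ht.ne', one_div]

lemma kernel_phi_integrable (t s c : ℝ) (ht : 0 < t) (f : ℝ → ℝ) (hfm : Measurable f)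
    (hf : Integrable f) :
    Integrable (fun x => t / ((s - x) ^ 2 + t ^ 2) * |f x - c|) := by
  have hb : Integrable
      (fun x => t / ((s - x) ^ 2 + t ^ 2) * |f x| + |c| * (t / ((s - x) ^ 2 + t ^ 2))) :=
    (kernel_mul_integrable t s ht _ hf.abs).add ((kernel_integrable t s ht).const_mul _)
  apply hb.mono'
  · exact ((kernel_cont t s ht).measurable.mul
      ((hfm.sub measurable_const).abs)).aestronglyMeasurable
  · apply ae_of_all
    intro x
    have hk : (0:ℝ) ≤ t / ((s - x) ^ 2 + t ^ 2) := by positivity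
    rw [Real.norm_eq_abs, abs_of_nonneg (by positivity)]
    have htri : |f x - c| ≤ |f x| + |c| := abs_sub _ _
    nlinarith [mul_le_mul_of_nonneg_left htri hk]

lemma vertical (f : ℝ → ℝ) (hfm : Measurable f) (hf_int : Integrable f) (x₀ : ℝ)
    (hx : ∀ ε > (0:ℝ), ∃ δ > (0:ℝ), ∀ r, 0 < r → r ≤ δ →
      (∫ y in Metric.closedBall x₀ r, |f y - f x₀|) ≤ ε * r) :
    Tendsto (fun t : ℝ => ∫ x, t / ((x₀ - x) ^ 2 + t ^ 2) * |f x - f x₀|) (𝓝[>] 0) (𝓝 0) := by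
  rw [NormedAddCommGroup.tendsto_nhds_zero]
  intro ε hε
  have hπ : 0 < π := pi_pos
  set ε' := ε / (2 * (1 + 2 * π)) with hε'def
  have hε'pos : 0 < ε' := by rw [hε'def]; positivity
  obtain ⟨δ, hδpos, hδ⟩ := hx ε' hε'pos
  have hfabs : (0:ℝ) ≤ ∫ x, |f x| := integral_nonneg fun x => abs_nonneg _
  set C := (∫ x, |f x|) / δ ^ 2 + |f x₀| * (2 / δ) * π with hC
  have hC0 : 0 ≤ C := by rw [hC]; positivity
  set t₁ := min δ ((ε / 2) / (C + 1)) with ht₁def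
  have ht₁pos : 0 < t₁ := lt_min hδpos (by positivity)
  filter_upwards [Ioo_mem_nhdsGT_of_mem ⟨le_refl (0:ℝ), ht₁pos⟩] with t ht
  obtain ⟨ht0, htt₁⟩ := ht
  have htδ : t ≤ δ := le_trans htt₁.le (min_le_left _ _)
  have hint : Integrable (fun x => t / ((x₀ - x) ^ 2 + t ^ 2) * |f x - f x₀|) :=
    kernel_phi_integrable t x₀ (f x₀) ht0 f hfm hf_int
  have hsplit : (∫ x, t / ((x₀ - x) ^ 2 + t ^ 2) * |f x - f x₀|)
      = (∫ x in Metric.closedBall x₀ δ, t / ((x₀ - x) ^ 2 + t ^ 2) * |f x - f x₀|)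
      + ∫ x in (Metric.closedBall x₀ δ)ᶜ, t / ((x₀ - x) ^ 2 + t ^ 2) * |f x - f x₀| :=
    (integral_add_compl measurableSet_closedBall hint).symm
  have hfarpt : ∀ x ∈ (Metric.closedBall x₀ δ)ᶜ,
      t / ((x₀ - x) ^ 2 + t ^ 2) * |f x - f x₀|
        ≤ (t / δ ^ 2) * |f x| + (|f x₀| * (2 * t / δ)) * (δ / ((x₀ - x) ^ 2 + δ ^ 2)) := by
    intro x hx'
    have hd : δ < |x - x₀| := by
      simpa [Metric.mem_closedBall, Real.dist_eq, not_le] using hx'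
    have hu2 : δ ^ 2 ≤ (x₀ - x) ^ 2 := by nlinarith [abs_nonneg (x - x₀), sq_abs (x - x₀)]
    have h1 : t / ((x₀ - x) ^ 2 + t ^ 2) ≤ t / δ ^ 2 :=
      div_le_div_of_nonneg_left ht0.le (by positivity) (by nlinarith [sq_nonneg t])
    have h2 : t / ((x₀ - x) ^ 2 + t ^ 2) ≤ (2 * t / δ) * (δ / ((x₀ - x) ^ 2 + δ ^ 2)) := by
      rw [div_mul_div_comm, div_le_div_iff₀ (by positivity) (by positivity)]
      nlinarith [sq_nonneg t, mul_pos ht0 hδpos]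
    have habs : |f x - f x₀| ≤ |f x| + |f x₀| := abs_sub _ _
    have hk : (0:ℝ) ≤ t / ((x₀ - x) ^ 2 + t ^ 2) := by positivity
    calc t / ((x₀ - x) ^ 2 + t ^ 2) * |f x - f x₀|
        ≤ t / ((x₀ - x) ^ 2 + t ^ 2) * (|f x| + |f x₀|) := mul_le_mul_of_nonneg_left habs hk
      _ = t / ((x₀ - x) ^ 2 + t ^ 2) * |f x| + |f x₀| * (t / ((x₀ - x) ^ 2 + t ^ 2)) := by ring
      _ ≤ (t / δ ^ 2) * |f x| + (|f x₀| * (2 * t / δ)) * (δ / ((x₀ - x) ^ 2 + δ ^ 2)) := by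
          apply add_le_add (mul_le_mul_of_nonneg_right h1 (abs_nonneg _))
          rw [mul_assoc]
          exact mul_le_mul_of_nonneg_left h2 (abs_nonneg _)
  have hbint : Integrable
      (fun x => (t / δ ^ 2) * |f x| + (|f x₀| * (2 * t / δ)) * (δ / ((x₀ - x) ^ 2 + δ ^ 2))) :=
    (hf_int.abs.const_mul _).add ((kernel_integrable δ x₀ hδpos).const_mul _)
  have hfar : (∫ x in (Metric.closedBall x₀ δ)ᶜ, t / ((x₀ - x) ^ 2 + t ^ 2) * |f x - f x₀|)
      ≤ C * t := by
    calc (∫ x in (Metric.closedBall x₀ δ)ᶜ, t / ((x₀ - x) ^ 2 + t ^ 2) * |f x - f x₀|)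
        ≤ ∫ x in (Metric.closedBall x₀ δ)ᶜ,
            (t / δ ^ 2) * |f x| + (|f x₀| * (2 * t / δ)) * (δ / ((x₀ - x) ^ 2 + δ ^ 2)) :=
          setIntegral_mono_on hint.integrableOn hbint.integrableOn
            measurableSet_closedBall.compl hfarpt
      _ ≤ ∫ x, (t / δ ^ 2) * |f x| + (|f x₀| * (2 * t / δ)) * (δ / ((x₀ - x) ^ 2 + δ ^ 2)) :=
          setIntegral_le_integral hbint (ae_of_all _ fun x => by positivity)
      _ = (t / δ ^ 2) * (∫ x, |f x|) + (|f x₀| * (2 * t / δ)) * π := by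
          rw [integral_add (hf_int.abs.const_mul _) ((kernel_integrable δ x₀ hδpos).const_mul _),
            integral_const_mul, integral_const_mul, kernel_integral δ x₀ hδpos]
      _ = C * t := by rw [hC]; ring
  have hnear := near_bound f hfm hf_int x₀ t δ ε' ht0 hδpos hε'pos.le hδ
  have hCt : C * t < ε / 2 := by
    have ht2 : t < (ε / 2) / (C + 1) := lt_of_lt_of_le htt₁ (min_le_right _ _)
    calc C * t ≤ (C + 1) * t := by nlinarith
      _ < (C + 1) * ((ε / 2) / (C + 1)) := by
          exact mul_lt_mul_of_pos_left ht2 (by positivity)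
      _ = ε / 2 := by field_simp
  have hnn : (0:ℝ) ≤ ∫ x, t / ((x₀ - x) ^ 2 + t ^ 2) * |f x - f x₀| :=
    integral_nonneg fun x => by positivity
  rw [Real.norm_eq_abs, abs_of_nonneg hnn, hsplit]
  have hnum : ε' / 2 + 2 * π * ε' ≤ ε / 2 := by
    rw [hε'def]
    have key : ε' * (1 + 2 * π) = ε / 2 := by
      rw [hε'def]
      field_simp
    nlinarith [hε'pos, key, hπ]
  calc (∫ x in Metric.closedBall x₀ δ, t / ((x₀ - x) ^ 2 + t ^ 2) * |f x - f x₀|)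
      + ∫ x in (Metric.closedBall x₀ δ)ᶜ, t / ((x₀ - x) ^ 2 + t ^ 2) * |f x - f x₀|
      < (ε' / 2 + 2 * π * ε') + ε / 2 := add_lt_add_of_le_of_lt hnear (hfar.trans_lt hCt)
    _ ≤ ε / 2 + ε / 2 := by linarith [hnum]
    _ = ε := by ring


lemma lebesgue_pts (f : ℝ → ℝ) (hf_int : Integrable f) :
    ∀ᵐ x₀ : ℝ, ∀ ε > (0:ℝ), ∃ δ > (0:ℝ), ∀ r, 0 < r → r ≤ δ →
      (∫ y in Metric.closedBall x₀ r, |f y - f x₀|) ≤ ε * r := by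
  filter_upwards [IsUnifLocDoublingMeasure.ae_tendsto_average_norm_sub (μ := volume)
    hf_int.locallyIntegrable 1] with x₀ hx₀
  intro ε hε
  have htend : Tendsto (fun r : ℝ => ⨍ y in Metric.closedBall x₀ r, |f y - f x₀|)
      (𝓝[>] 0) (𝓝 0) := by
    have := hx₀ (fun _ : ℝ => x₀) id tendsto_id ?_
    · simpa only [Real.norm_eq_abs, id] using this
    · filter_upwards [self_mem_nhdsWithin] with r hr
      simp only [Metric.mem_closedBall, dist_self]
      have : (0:ℝ) < r := hr
      positivity
  have h2 : ∀ᶠ r in 𝓝[>] (0:ℝ),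
      (⨍ y in Metric.closedBall x₀ r, |f y - f x₀|) < ε / 2 :=
    htend.eventually (gt_mem_nhds (half_pos hε))
  rw [Filter.eventually_iff] at h2
  obtain ⟨u, hu, hsub⟩ := mem_nhdsGT_iff_exists_Ioc_subset.1 h2
  refine ⟨u, hu, fun r hr0 hru => ?_⟩
  have havg : (⨍ y in Metric.closedBall x₀ r, |f y - f x₀|) < ε / 2 := hsub ⟨hr0, hru⟩
  have hvol : (volume (Metric.closedBall x₀ r)).toReal = 2 * r := by
    rw [Real.volume_closedBall, ENNReal.toReal_ofReal (by positivity)]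
  have hav := setAverage_eq (fun y => |f y - f x₀|) (Metric.closedBall x₀ r) (μ := volume)
  rw [measureReal_def, hvol, smul_eq_mul] at hav
  have h2r : (0:ℝ) < 2 * r := by positivity
  have : (∫ y in Metric.closedBall x₀ r, |f y - f x₀|)
      = 2 * r * ⨍ y in Metric.closedBall x₀ r, |f y - f x₀| := by
    rw [hav]
    field_simp
  rw [this]
  calc 2 * r * (⨍ y in Metric.closedBall x₀ r, |f y - f x₀|)
      ≤ 2 * r * (ε / 2) := by
        apply mul_le_mul_of_nonneg_left havg.le h2r.le
    _ = ε * r := by ring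

theorem fatou_integrable_density
    (f : ℝ → ℝ) (hf_nonneg : 0 ≤ f) (hf_int : Integrable f) :
    ∀ᵐ x₀ : ℝ, ∀ c > (0 : ℝ),
      Tendsto (fun z : ℂ => (1 / π) * ∫ x, poissonKernelUHP z x * f x)
        (𝓝[cone x₀ c] (x₀ : ℂ)) (𝓝 (f x₀)) := by
  obtain ⟨g, hgm, hgf⟩ : ∃ g : ℝ → ℝ, Measurable g ∧ f =ᵐ[volume] g :=
    ⟨hf_int.1.mk f, hf_int.1.stronglyMeasurable_mk.measurable, hf_int.1.ae_eq_mk⟩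
  have hg_int : Integrable g := hf_int.congr hgf
  filter_upwards [lebesgue_pts g hg_int, hgf] with x₀ hx₀ hgx₀
  intro c hc
  have hπ : 0 < π := pi_pos
  have hvert := vertical g hgm hg_int x₀ hx₀
  have himl : Tendsto (fun z : ℂ => z.im) (𝓝[cone x₀ c] (x₀:ℂ)) (𝓝[>] 0) := by
    apply tendsto_nhdsWithin_of_tendsto_nhds_of_eventually_within
    · have h := Complex.continuous_im.tendsto (x₀:ℂ)
      rw [Complex.ofReal_im] at h
      exact h.mono_left nhdsWithin_le_nhds
    · filter_upwards [self_mem_nhdsWithin] with z hz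
      exact hz.1
  have hcomp : Tendsto (fun z : ℂ =>
      ((2 + 2*c^2)/π) * ∫ x, z.im / ((x₀ - x)^2 + z.im^2) * |g x - g x₀|)
      (𝓝[cone x₀ c] (x₀:ℂ)) (𝓝 0) := by
    have h := (hvert.comp himl).const_mul ((2 + 2*c^2)/π)
    simpa [Function.comp] using h
  rw [show f x₀ = g x₀ from hgx₀, tendsto_iff_dist_tendsto_zero]
  apply squeeze_zero' (Eventually.of_forall fun z => dist_nonneg) ?_ hcomp
  filter_upwards [self_mem_nhdsWithin] with z hz
  obtain ⟨hzim, hzcone⟩ := hz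
  simp only [poissonKernelUHP]
  have hIeq : (∫ x, z.im / ((z.re - x)^2 + z.im^2) * f x) = ∫ x, z.im / ((z.re - x)^2 + z.im^2) * g x :=
    integral_congr_ae (hgf.mono fun x hx => by dsimp only; rw [hx])
  have hker_nonneg : ∀ x, 0 ≤ z.im / ((z.re - x)^2 + z.im^2) := fun x => by positivity
  have hPint : Integrable (fun x => z.im / ((z.re - x)^2 + z.im^2) * g x) :=
    kernel_mul_integrable z.im z.re hzim g hg_int
  have hPphiint : Integrable (fun x => z.im / ((z.re - x)^2 + z.im^2) * |g x - g x₀|) :=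
    kernel_phi_integrable z.im z.re (g x₀) hzim g hgm hg_int
  have hphiint : Integrable (fun x => z.im / ((x₀ - x)^2 + z.im^2) * |g x - g x₀|) :=
    kernel_phi_integrable z.im x₀ (g x₀) hzim g hgm hg_int
  have hsub : (∫ x, z.im / ((z.re - x)^2 + z.im^2) * g x) - π * g x₀
      = ∫ x, z.im / ((z.re - x)^2 + z.im^2) * (g x - g x₀) := by
    have h1 : (fun x => z.im / ((z.re - x)^2 + z.im^2) * (g x - g x₀))
        = fun x => z.im / ((z.re - x)^2 + z.im^2) * g x - z.im / ((z.re - x)^2 + z.im^2) * g x₀ :=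
      funext fun x => by ring
    rw [h1, integral_sub hPint ((kernel_integrable z.im z.re hzim).mul_const _)]
    have h2 : (∫ x, z.im / ((z.re - x)^2 + z.im^2) * g x₀) = π * g x₀ := by
      rw [integral_mul_const, kernel_integral z.im z.re hzim]
    rw [h2]
  have habs : |∫ x, z.im / ((z.re - x)^2 + z.im^2) * (g x - g x₀)|
      ≤ ∫ x, z.im / ((z.re - x)^2 + z.im^2) * |g x - g x₀| := by
    calc |∫ x, z.im / ((z.re - x)^2 + z.im^2) * (g x - g x₀)|
        ≤ ∫ x, |z.im / ((z.re - x)^2 + z.im^2) * (g x - g x₀)| := by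
          simpa only [Real.norm_eq_abs] using
            norm_integral_le_integral_norm (μ := volume) (fun x => z.im / ((z.re - x)^2 + z.im^2) * (g x - g x₀))
      _ = ∫ x, z.im / ((z.re - x)^2 + z.im^2) * |g x - g x₀| :=
          integral_congr_ae (ae_of_all _ fun x => by
            dsimp only; rw [abs_mul, abs_of_nonneg (hker_nonneg x)])
  have hcone2 : ∀ x : ℝ, z.im / ((z.re - x)^2 + z.im^2) * |g x - g x₀|
      ≤ (2 + 2*c^2) * (z.im / ((x₀ - x)^2 + z.im^2) * |g x - g x₀|) := by
    intro x
    rw [← mul_assoc]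
    apply mul_le_mul_of_nonneg_right ?_ (abs_nonneg _)
    have h1 : (z.re - x₀)^2 ≤ (c*z.im)^2 := by
      rw [← sq_abs]
      exact pow_le_pow_left₀ (abs_nonneg _) hzcone 2
    have hB : (x₀ - x)^2 + z.im^2 ≤ (2 + 2*c^2) * ((z.re - x)^2 + z.im^2) := by
      nlinarith [sq_nonneg ((x₀ - z.re) - (z.re - x)), sq_nonneg (c*z.im), sq_nonneg c, sq_nonneg z.im,
        mul_nonneg (mul_nonneg (sq_nonneg c) (sq_nonneg (z.re-x))) (by norm_num : (0:ℝ) ≤ 2)]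
    rw [mul_div_assoc']
    rw [div_le_div_iff₀ (by positivity) (by positivity)]
    nlinarith [mul_le_mul_of_nonneg_left hB hzim.le]
  have hmono : (∫ x, z.im / ((z.re - x)^2 + z.im^2) * |g x - g x₀|)
      ≤ (2 + 2*c^2) * ∫ x, z.im / ((x₀ - x)^2 + z.im^2) * |g x - g x₀| := by
    calc (∫ x, z.im / ((z.re - x)^2 + z.im^2) * |g x - g x₀|)
        ≤ ∫ x, (2 + 2*c^2) * (z.im / ((x₀ - x)^2 + z.im^2) * |g x - g x₀|) :=
          integral_mono hPphiint (hphiint.const_mul _) hcone2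
      _ = (2 + 2*c^2) * ∫ x, z.im / ((x₀ - x)^2 + z.im^2) * |g x - g x₀| := integral_const_mul _ _
  rw [Real.dist_eq, hIeq]
  have hcalc : 1/π * (∫ x, z.im / ((z.re - x)^2 + z.im^2) * g x) - g x₀
      = 1/π * ∫ x, z.im / ((z.re - x)^2 + z.im^2) * (g x - g x₀) := by
    rw [← hsub]
    field_simp
  rw [hcalc, abs_mul, abs_of_nonneg (by positivity : (0:ℝ) ≤ 1/π)]
  calc 1/π * |∫ x, z.im / ((z.re - x)^2 + z.im^2) * (g x - g x₀)|
      ≤ 1/π * ∫ x, z.im / ((z.re - x)^2 + z.im^2) * |g x - g x₀| :=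
        mul_le_mul_of_nonneg_left habs (by positivity)
    _ ≤ 1/π * ((2 + 2*c^2) * ∫ x, z.im / ((x₀ - x)^2 + z.im^2) * |g x - g x₀|) :=
        mul_le_mul_of_nonneg_left hmono (by positivity)
    _ = ((2 + 2*c^2)/π) * ∫ x, z.im / ((x₀ - x)^2 + z.im^2) * |g x - g x₀| := by ring
end

section
/- Poisson integrals of singular measures vanish nontangentially Lebesgue-almost everywhere: let η_s be a finite Borel measure on ℝ singular with respect to Lebesgue measure and let h(z) = ∫_ℝ P(z,x) dη_s(x). Then for Lebesgue-almost every x₀ ∈ ℝ and every aperture c > 0, h(z) → 0 as z → x₀ with z in the cone Γ_c(x₀). -/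
open MeasureTheory Filter Topology

open Set in
lemma poisson_nonneg {z : ℂ} (hz : 0 < z.im) (x : ℝ) : 0 ≤ poissonKernelUHP z x := by
  unfold poissonKernelUHP; positivity

lemma poisson_cone_le {x₀ c : ℝ} {z : ℂ} (hz : z ∈ cone x₀ c) (x : ℝ) :
    poissonKernelUHP z x ≤ (2 + 2 * c ^ 2) * (z.im / ((x₀ - x) ^ 2 + z.im ^ 2)) := by
  obtain ⟨hy, hcone⟩ := hz
  set y := z.im
  set u := z.re
  have h1 : (x₀ - x) ^ 2 ≤ 2 * (u - x₀) ^ 2 + 2 * (u - x) ^ 2 := by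
    nlinarith [sq_nonneg (2*u - x₀ - x)]
  have h2 : (u - x₀) ^ 2 ≤ c ^ 2 * y ^ 2 := by
    have := abs_le.mp hcone; nlinarith
  have hA : 0 < (u - x) ^ 2 + y ^ 2 := by positivity
  have hB : 0 < (x₀ - x) ^ 2 + y ^ 2 := by positivity
  have key : (x₀ - x) ^ 2 + y ^ 2 ≤ (2 + 2 * c ^ 2) * ((u - x) ^ 2 + y ^ 2) := by nlinarith
  unfold poissonKernelUHP
  rw [mul_div_assoc', div_le_div_iff₀ hA hB]
  nlinarith [mul_le_mul_of_nonneg_left key hy.le]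

open Set in
lemma core (η : Measure ℝ) [IsFiniteMeasure η] {x₀ ε R y : ℝ}
    (hε : 0 < ε) (hR : 0 < R) (hy : 0 < y)
    (hball : ∀ r, 0 < r → r ≤ R → η (Metric.closedBall x₀ r) ≤ ENNReal.ofReal (ε * r)) :
    ∫⁻ x, ENNReal.ofReal (y / ((x₀ - x) ^ 2 + y ^ 2)) ∂η
      ≤ ENNReal.ofReal (2 * ε) + η Set.univ * ENNReal.ofReal (y / R ^ 2) := by
  have f_nn : 0 ≤ᵐ[η] fun x => y / ((x₀ - x) ^ 2 + y ^ 2) := by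
    filter_upwards with x; positivity
  have f_mble : AEMeasurable (fun x => y / ((x₀ - x) ^ 2 + y ^ 2)) η := by
    fun_prop
  rw [lintegral_eq_lintegral_meas_le η f_nn f_mble]
  set t₀ := y / R ^ 2 with ht₀def
  have ht₀ : 0 < t₀ := by positivity
  -- pointwise bound on the distribution function
  have hbound : ∀ t ∈ Ioi (0:ℝ),
      η {a : ℝ | t ≤ y / ((x₀ - a) ^ 2 + y ^ 2)}
        ≤ (Ioc 0 t₀).indicator (fun _ => η Set.univ) t
          + (Ioc t₀ (1/y)).indicator (fun t => ENNReal.ofReal (ε * Real.sqrt (y / t))) t := by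
    intro t ht
    rw [mem_Ioi] at ht
    rcases le_or_gt t t₀ with h1 | h1
    · calc η {a : ℝ | t ≤ y / ((x₀ - a) ^ 2 + y ^ 2)} ≤ η Set.univ := measure_mono (subset_univ _)
        _ ≤ _ := by
            rw [indicator_of_mem (mem_Ioc.mpr ⟨ht, h1⟩)]; exact le_add_right le_rfl
    rcases le_or_gt t (1/y) with h2 | h2
    · rw [indicator_of_notMem (by simp only [mem_Ioc, not_and, not_le]; exact fun _ => h1),
        indicator_of_mem (mem_Ioc.mpr ⟨h1, h2⟩), zero_add]
      have hsub : {a : ℝ | t ≤ y / ((x₀ - a) ^ 2 + y ^ 2)} ⊆ Metric.closedBall x₀ (Real.sqrt (y / t)) := by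
        intro a ha
        rw [mem_setOf_eq] at ha
        have hA : 0 < (x₀ - a) ^ 2 + y ^ 2 := by positivity
        have : (x₀ - a) ^ 2 ≤ y / t := by
          rw [le_div_iff₀ hA] at ha
          have : t * (x₀ - a) ^ 2 ≤ y := by nlinarith
          rw [le_div_iff₀ ht]; linarith [mul_comm t ((x₀ - a)^2)]
        rw [Metric.mem_closedBall, Real.dist_eq, ← Real.sqrt_sq_eq_abs]
        apply Real.sqrt_le_sqrt
        calc (a - x₀) ^ 2 = (x₀ - a) ^ 2 := by ring
          _ ≤ y / t := this
      calc η _ ≤ η (Metric.closedBall x₀ (Real.sqrt (y / t))) := measure_mono hsub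
        _ ≤ ENNReal.ofReal (ε * Real.sqrt (y / t)) := by
            apply hball
            · positivity
            · rw [show R = Real.sqrt (R ^ 2) from (Real.sqrt_sq hR.le).symm]
              apply Real.sqrt_le_sqrt
              rw [div_le_iff₀ ht]
              rw [ht₀def] at h1
              rw [div_lt_iff₀ (by positivity : (0:ℝ) < R ^ 2)] at h1
              linarith [mul_comm t (R^2)]
    · have : {a : ℝ | t ≤ y / ((x₀ - a) ^ 2 + y ^ 2)} = ∅ := by
        ext a
        simp only [mem_setOf_eq, mem_empty_iff_false, iff_false, not_le]
        have hA : 0 < (x₀ - a) ^ 2 + y ^ 2 := by positivity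
        calc y / ((x₀ - a) ^ 2 + y ^ 2) ≤ y / y ^ 2 := by
              apply div_le_div_of_nonneg_left hy.le (by positivity) (by nlinarith [sq_nonneg (x₀-a)])
          _ = 1 / y := by rw [pow_two]; field_simp
          _ < t := h2
      rw [this, measure_empty]
      exact zero_le
  calc ∫⁻ t in Ioi 0, η {a : ℝ | t ≤ y / ((x₀ - a) ^ 2 + y ^ 2)}
      ≤ ∫⁻ t in Ioi 0, ((Ioc 0 t₀).indicator (fun _ => η Set.univ) t
          + (Ioc t₀ (1/y)).indicator (fun t => ENNReal.ofReal (ε * Real.sqrt (y / t))) t) :=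
        setLIntegral_mono' measurableSet_Ioi hbound
    _ = (∫⁻ t in Ioi 0, (Ioc 0 t₀).indicator (fun _ => η Set.univ) t)
          + ∫⁻ t in Ioi 0, (Ioc t₀ (1/y)).indicator (fun t => ENNReal.ofReal (ε * Real.sqrt (y / t))) t := by
        apply lintegral_add_left
        exact (measurable_const.indicator measurableSet_Ioc)
    _ ≤ ENNReal.ofReal (2 * ε) + η Set.univ * ENNReal.ofReal (y / R ^ 2) := by
        rw [add_comm (ENNReal.ofReal (2*ε))]
        gcongr
        · calc ∫⁻ t in Ioi 0, (Ioc 0 t₀).indicator (fun _ => η Set.univ) t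
              ≤ ∫⁻ t, (Ioc 0 t₀).indicator (fun _ => η Set.univ) t :=
                setLIntegral_le_lintegral _ _
            _ = η Set.univ * volume (Ioc 0 t₀) := by
                rw [lintegral_indicator measurableSet_Ioc, setLIntegral_const]
            _ = η Set.univ * ENNReal.ofReal (y / R ^ 2) := by
                rw [Real.volume_Ioc, sub_zero]
        · set C := ε * Real.sqrt y with hC
          have hCpos : 0 < C := by positivity
          calc ∫⁻ t in Ioi 0, (Ioc t₀ (1/y)).indicator (fun t => ENNReal.ofReal (ε * Real.sqrt (y / t))) t
              ≤ ∫⁻ t, (Ioc t₀ (1/y)).indicator (fun t => ENNReal.ofReal (ε * Real.sqrt (y / t))) t :=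
                setLIntegral_le_lintegral _ _
            _ = ∫⁻ t in Ioc t₀ (1/y), ENNReal.ofReal (ε * Real.sqrt (y / t)) :=
                lintegral_indicator measurableSet_Ioc _
            _ ≤ ∫⁻ t in Ioc 0 (1/y), ENNReal.ofReal (ε * Real.sqrt (y / t)) :=
                lintegral_mono_set (Ioc_subset_Ioc_left ht₀.le)
            _ = ∫⁻ t in Ioc 0 (1/y), ENNReal.ofReal (C * t ^ (-(1/2) : ℝ)) := by
                apply setLIntegral_congr_fun measurableSet_Ioc
                intro t ht'
                congr 1
                have e1 : Real.sqrt (y / t) = Real.sqrt y / Real.sqrt t := Real.sqrt_div hy.le t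
                have e2 : t ^ (-(1/2) : ℝ) = (Real.sqrt t)⁻¹ := by
                  rw [Real.rpow_neg ht'.1.le, Real.sqrt_eq_rpow]
                beta_reduce; congr 1; rw [hC, e1, e2]; ring
            _ = ENNReal.ofReal (∫ t in Ioc 0 (1/y), C * t ^ (-(1/2) : ℝ)) := by
                rw [← ofReal_integral_eq_lintegral_ofReal]
                · apply Integrable.const_mul
                  show IntegrableOn (fun t : ℝ => t ^ (-(1/2) : ℝ)) (Ioc 0 (1/y)) volume
                  rw [← uIoc_of_le (by positivity : (0:ℝ) ≤ 1/y), ← intervalIntegrable_iff]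
                  exact intervalIntegral.intervalIntegrable_rpow' (by norm_num)
                · filter_upwards [self_mem_ae_restrict measurableSet_Ioc] with t ht'
                  have : 0 < t := ht'.1
                  positivity
            _ = ENNReal.ofReal (2 * ε) := by
                congr 1
                rw [integral_const_mul,
                  ← intervalIntegral.integral_of_le (by positivity : (0:ℝ) ≤ 1/y),
                  integral_rpow (Or.inl (by norm_num))]
                have h1y : ((1:ℝ)/y) ^ (-(1/2) + 1 : ℝ) = Real.sqrt (1/y) := by
                  rw [show (-(1/2) + 1 : ℝ) = 1/2 by norm_num, ← Real.sqrt_eq_rpow]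
                have h0 : (0:ℝ) ^ (-(1/2) + 1 : ℝ) = 0 := Real.zero_rpow (by norm_num)
                rw [h1y, h0, hC]
                have hmul : Real.sqrt y * Real.sqrt (1/y) = 1 := by
                  rw [← Real.sqrt_mul hy.le, mul_one_div, div_self hy.ne', Real.sqrt_one]
                calc ε * Real.sqrt y * ((Real.sqrt (1/y) - 0) / (-(1/2) + 1)) 
                    = ε * (Real.sqrt y * Real.sqrt (1/y)) * 2 := by ring_nf
                  _ = 2 * ε := by rw [hmul]; ring

open Set in
set_option maxHeartbeats 1000000 in
theorem singular_poisson_integral_vanishes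
    (η_s : Measure ℝ) [IsFiniteMeasure η_s]
    (hsing : η_s.MutuallySingular MeasureTheory.volume) :
    ∀ᵐ x₀ : ℝ, ∀ c > (0 : ℝ),
      Tendsto (fun z : ℂ => ∫ x, poissonKernelUHP z x ∂η_s)
        (𝓝[cone x₀ c] (x₀ : ℂ)) (𝓝 0) := by
  have hrn : η_s.rnDeriv volume =ᵐ[volume] 0 :=
    (Measure.rnDeriv_eq_zero _ _).mpr hsing
  filter_upwards [Besicovitch.ae_tendsto_rnDeriv η_s volume, hrn] with x₀ hx₀ hrn0
  rw [hrn0] at hx₀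
  intro c hc
  rw [Metric.tendsto_nhdsWithin_nhds]
  intro ε hε
  set K : ℝ := 2 + 2 * c ^ 2 with hKdef
  have hK : 0 < K := by positivity
  set M : ℝ := (η_s Set.univ).toReal with hMdef
  have hM : 0 ≤ M := ENNReal.toReal_nonneg
  set ε₁ : ℝ := ε / (8 * K) with hε₁def
  have hε₁ : 0 < ε₁ := by positivity
  -- find R such that the maximal-type bound holds for all radii ≤ R
  have hev : ∀ᶠ r in 𝓝[>] (0:ℝ),
      η_s (Metric.closedBall x₀ r) / volume (Metric.closedBall x₀ r)
        < ENNReal.ofReal (ε₁ / 2) := by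
    apply hx₀.eventually_lt_const
    simp [ENNReal.ofReal_pos, half_pos hε₁]
  obtain ⟨R', hR', hIoo⟩ := mem_nhdsGT_iff_exists_Ioo_subset.mp hev
  rw [mem_Ioi] at hR'
  set R : ℝ := R' / 2 with hRdef
  have hR : 0 < R := by positivity
  have hball : ∀ r, 0 < r → r ≤ R →
      η_s (Metric.closedBall x₀ r) ≤ ENNReal.ofReal (ε₁ * r) := by
    intro r hr hrR
    have hmem : r ∈ Ioo (0:ℝ) R' := ⟨hr, by linarith⟩
    have := hIoo hmem
    rw [mem_setOf_eq, Real.volume_closedBall] at this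
    have h2r : (0:ℝ) < 2 * r := by linarith
    rw [ENNReal.div_lt_iff (Or.inl (by simp [ENNReal.ofReal_eq_zero]; linarith))
      (Or.inl ENNReal.ofReal_ne_top)] at this
    calc η_s (Metric.closedBall x₀ r)
        ≤ ENNReal.ofReal (ε₁ / 2) * ENNReal.ofReal (2 * r) := this.le
      _ = ENNReal.ofReal (ε₁ * r) := by
          rw [← ENNReal.ofReal_mul (by positivity)]; ring_nf
  -- choose δ
  set δ : ℝ := min R (ε * R ^ 2 / (8 * K * (M + 1))) with hδdef
  have hδ : 0 < δ := lt_min hR (by positivity)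
  refine ⟨δ, hδ, ?_⟩
  clear_value K M ε₁ R δ
  intro z hz hdist
  obtain ⟨hy, hcone⟩ := hz
  set y : ℝ := z.im with hydef
  have hyδ : y < δ := by
    calc y ≤ |(z - x₀).im| := by simp [hydef]; exact le_abs_self _
      _ ≤ ‖z - x₀‖ := Complex.abs_im_le_norm _
      _ = dist z x₀ := (Complex.dist_eq _ _).symm
      _ < δ := hdist
  -- the main bound
  have hBne : (ENNReal.ofReal K * (ENNReal.ofReal (2 * ε₁)
      + η_s Set.univ * ENNReal.ofReal (y / R ^ 2))) ≠ ⊤ := by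
    apply ENNReal.mul_ne_top ENNReal.ofReal_ne_top
    exact ENNReal.add_ne_top.mpr ⟨ENNReal.ofReal_ne_top,
      ENNReal.mul_ne_top (measure_ne_top _ _) ENNReal.ofReal_ne_top⟩
  have hint : ∫ x, poissonKernelUHP z x ∂η_s
      = (∫⁻ x, ENNReal.ofReal (poissonKernelUHP z x) ∂η_s).toReal := by
    apply integral_eq_lintegral_of_nonneg_ae
    · filter_upwards with x; exact poisson_nonneg hy x
    · apply Continuous.aestronglyMeasurable
      exact continuous_const.div (by continuity) (fun x => by positivity)
  have hlin : ∫⁻ x, ENNReal.ofReal (poissonKernelUHP z x) ∂η_s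
      ≤ ENNReal.ofReal K * (ENNReal.ofReal (2 * ε₁)
          + η_s Set.univ * ENNReal.ofReal (y / R ^ 2)) := by
    calc ∫⁻ x, ENNReal.ofReal (poissonKernelUHP z x) ∂η_s
        ≤ ∫⁻ x, ENNReal.ofReal K * ENNReal.ofReal (y / ((x₀ - x) ^ 2 + y ^ 2)) ∂η_s := by
          apply lintegral_mono
          intro x
          calc ENNReal.ofReal (poissonKernelUHP z x)
              ≤ ENNReal.ofReal (K * (y / ((x₀ - x) ^ 2 + y ^ 2))) :=
                ENNReal.ofReal_le_ofReal (by rw [hKdef]; exact poisson_cone_le ⟨hy, hcone⟩ x)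
            _ = ENNReal.ofReal K * ENNReal.ofReal (y / ((x₀ - x) ^ 2 + y ^ 2)) :=
                ENNReal.ofReal_mul hK.le
      _ = ENNReal.ofReal K * ∫⁻ x, ENNReal.ofReal (y / ((x₀ - x) ^ 2 + y ^ 2)) ∂η_s :=
          lintegral_const_mul' _ _ ENNReal.ofReal_ne_top
      _ ≤ _ := by
          gcongr
          exact core η_s hε₁ hR hy hball
  have hfinal : ∫ x, poissonKernelUHP z x ∂η_s ≤ K * (2 * ε₁) + K * (M * (y / R ^ 2)) := by
    rw [hint]
    calc (∫⁻ x, ENNReal.ofReal (poissonKernelUHP z x) ∂η_s).toReal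
        ≤ (ENNReal.ofReal K * (ENNReal.ofReal (2 * ε₁)
            + η_s Set.univ * ENNReal.ofReal (y / R ^ 2))).toReal :=
          ENNReal.toReal_mono hBne hlin
      _ = K * (2 * ε₁) + K * (M * (y / R ^ 2)) := by
          rw [ENNReal.toReal_mul, ENNReal.toReal_add ENNReal.ofReal_ne_top
            (ENNReal.mul_ne_top (measure_ne_top _ _) ENNReal.ofReal_ne_top),
            ENNReal.toReal_mul, ENNReal.toReal_ofReal hK.le,
            ENNReal.toReal_ofReal (by positivity),
            ENNReal.toReal_ofReal (by positivity), ← hMdef]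
          ring
  have hnn : 0 ≤ ∫ x, poissonKernelUHP z x ∂η_s :=
    integral_nonneg (fun x => poisson_nonneg hy x)
  rw [Real.dist_eq, sub_zero, abs_of_nonneg hnn]
  clear_value y
  -- arithmetic
  have h1 : K * (2 * ε₁) = ε / 4 := by
    rw [hε₁def]; field_simp; ring
  have h2 : K * (M * (y / R ^ 2)) < ε / 2 := by
    have hyδ2 : y < ε * R ^ 2 / (8 * K * (M + 1)) := lt_of_lt_of_le hyδ ((le_of_eq hδdef).trans (min_le_right _ _))
    have e1 : y * (8 * K * (M + 1)) < ε * R ^ 2 :=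
      (lt_div_iff₀ (by positivity : (0:ℝ) < 8 * K * (M + 1))).mp hyδ2
    rw [show K * (M * (y / R ^ 2)) = K * M * y / R ^ 2 by ring,
      div_lt_iff₀ (by positivity : (0:ℝ) < R ^ 2)]
    nlinarith [mul_pos hK hy]
  linarith [hfinal]
end

section
/- Poisson integrals of singular measures blow up nontangentially almost everywhere for the singular measure: let η_s be a finite Borel measure on ℝ singular with respect to Lebesgue measure and let h(z) = ∫_ℝ P(z,x) dη_s(x). Then for η_s-almost every x₀ ∈ ℝ and every aperture c > 0, h(z) → ∞ as z → x₀ with z in the cone Γ_c(x₀). -/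
open MeasureTheory Filter Topology

/-- For a measure singular with respect to Lebesgue, the ratio of the measure of closed balls
to their Lebesgue measure tends to infinity almost everywhere. -/
lemma ae_ratio_tendsto_top (η_s : Measure ℝ) [IsFiniteMeasure η_s]
    (hsing : η_s.MutuallySingular MeasureTheory.volume) :
    ∀ᵐ x₀ : ℝ ∂η_s, Tendsto
      (fun r => η_s (Metric.closedBall x₀ r) / volume (Metric.closedBall x₀ r))
      (𝓝[>] (0:ℝ)) (𝓝 ⊤) := by
  filter_upwards [Besicovitch.ae_tendsto_rnDeriv volume η_s,
    hsing.symm.rnDeriv_ae_eq_zero] with x hx h0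
  simp only [Pi.zero_apply] at h0
  rw [h0] at hx
  have hinv : Tendsto
      (fun r => (volume (Metric.closedBall x r) / η_s (Metric.closedBall x r))⁻¹)
      (𝓝[>] (0:ℝ)) (𝓝 (0 : ENNReal)⁻¹) := ENNReal.tendsto_inv_iff.2 hx
  rw [ENNReal.inv_zero] at hinv
  refine hinv.congr' ?_
  filter_upwards [self_mem_nhdsWithin] with r hr
  have hr' : (0:ℝ) < r := hr
  have hvol : volume (Metric.closedBall x r) ≠ 0 := by
    rw [Real.volume_closedBall]
    simp only [ne_eq, ENNReal.ofReal_eq_zero, not_le]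
    linarith
  exact ENNReal.inv_div (Or.inl (measure_ne_top _ _)) (Or.inr hvol)

theorem singular_poisson_integral_blows_up
    (η_s : Measure ℝ) [IsFiniteMeasure η_s]
    (hsing : η_s.MutuallySingular MeasureTheory.volume) :
    ∀ᵐ x₀ : ℝ ∂η_s, ∀ c > (0 : ℝ),
      Tendsto (fun z : ℂ => ∫ x, upperHalfPlanePoissonKernel z x ∂η_s)
        (𝓝[cone x₀ c] (x₀ : ℂ)) atTop := by
  filter_upwards [ae_ratio_tendsto_top η_s hsing] with x₀ hx₀ c hc
  rw [tendsto_atTop]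
  intro M
  set M' := max M 1 with hM'
  have hM'pos : (0:ℝ) < M' := lt_of_lt_of_le one_pos (le_max_right _ _)
  set K := (c+1)^2 + 1 with hK
  have hKpos : (0:ℝ) < K := by positivity
  -- eventually the ratio exceeds `M' * K`
  have h1 : ∀ᶠ r in 𝓝[>] (0:ℝ), ENNReal.ofReal (M' * K) <
      η_s (Metric.closedBall x₀ r) / volume (Metric.closedBall x₀ r) :=
    hx₀ (Ioi_mem_nhds (by exact ENNReal.ofReal_lt_top))
  obtain ⟨ε, hε, hε'⟩ := mem_nhdsGT_iff_exists_Ioc_subset.1 h1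
  have hεpos : (0:ℝ) < ε := hε
  have h2 : ∀ᶠ z : ℂ in 𝓝[cone x₀ c] (x₀ : ℂ), dist z (x₀:ℂ) < ε :=
    eventually_nhdsWithin_of_eventually_nhds
      (Metric.ball_mem_nhds _ hεpos)
  filter_upwards [h2, self_mem_nhdsWithin] with z hdist hz
  obtain ⟨him, hcone⟩ := hz
  set r := z.im with hr
  have hrε : r ≤ ε := by
    have : r ≤ dist z (x₀:ℂ) := by
      rw [Complex.dist_eq]
      calc r = (z - (x₀:ℂ)).im := by simp [hr]
        _ ≤ |(z - (x₀:ℂ)).im| := le_abs_self _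
        _ ≤ ‖z - (x₀:ℂ)‖ := Complex.abs_im_le_norm _
    linarith
  have hball := hε' ⟨him, hrε⟩
  simp only [Set.mem_setOf_eq] at hball
  -- convert the measure bound to a real bound
  have hmeas : M' * K * r ≤ (η_s (Metric.closedBall x₀ r)).toReal := by
    rw [ENNReal.lt_div_iff_mul_lt (Or.inl (by
      rw [Real.volume_closedBall]
      simp only [ne_eq, ENNReal.ofReal_eq_zero, not_le]; linarith))
      (Or.inl (by rw [Real.volume_closedBall]; exact ENNReal.ofReal_ne_top))] at hball
    rw [Real.volume_closedBall, ← ENNReal.ofReal_mul (by positivity)] at hball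
    have h2le : ENNReal.ofReal (M' * K * r) ≤ η_s (Metric.closedBall x₀ r) := by
      refine le_trans (ENNReal.ofReal_le_ofReal ?_) hball.le
      nlinarith [mul_pos (mul_pos hM'pos hKpos) him]
    calc M' * K * r = (ENNReal.ofReal (M' * K * r)).toReal := by
          rw [ENNReal.toReal_ofReal (by positivity)]
      _ ≤ (η_s (Metric.closedBall x₀ r)).toReal :=
          ENNReal.toReal_mono (measure_ne_top _ _) h2le
  -- pointwise lower bound on the Poisson kernel on the ball
  have hden : ∀ x : ℝ, 0 < (z.re - x) ^ 2 + z.im ^ 2 := fun x => by positivity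
  have hpos : ∀ x : ℝ, 0 ≤ upperHalfPlanePoissonKernel z x := fun x =>
    div_nonneg him.le (hden x).le
  have hbound : ∀ x ∈ Metric.closedBall x₀ r, 1 / (K * r) ≤ upperHalfPlanePoissonKernel z x := by
    intro x hx
    rw [Metric.mem_closedBall, Real.dist_eq] at hx
    have h1 : |z.re - x| ≤ (c + 1) * r := by
      calc |z.re - x| ≤ |z.re - x₀| + |x₀ - x| := abs_sub_le _ _ _
        _ ≤ c * r + r := by
            have : |x₀ - x| = |x - x₀| := abs_sub_comm _ _
            rw [this]; exact add_le_add hcone hx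
        _ = (c + 1) * r := by ring
    have h2 : (z.re - x) ^ 2 + z.im ^ 2 ≤ K * r ^ 2 := by
      have := sq_abs (z.re - x)
      nlinarith [abs_nonneg (z.re - x)]
    rw [upperHalfPlanePoissonKernel, div_le_div_iff₀ (by positivity) (hden x), one_mul]
    calc (z.re - x) ^ 2 + z.im ^ 2 ≤ K * r ^ 2 := h2
      _ = z.im * (K * r) := by rw [hr]; ring
  -- integrability
  have hcont : Continuous (upperHalfPlanePoissonKernel z) := by
    apply Continuous.div continuous_const
    · continuity
    · exact fun x => (hden x).ne'
  have hint : Integrable (upperHalfPlanePoissonKernel z) η_s := by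
    refine Integrable.mono' (integrable_const (1 / r)) hcont.aestronglyMeasurable ?_
    filter_upwards with x
    rw [Real.norm_eq_abs, abs_of_nonneg (hpos x)]
    rw [upperHalfPlanePoissonKernel, div_le_div_iff₀ (hden x) him, one_mul]
    nlinarith [sq_nonneg (z.re - x)]
  -- put things together
  calc M ≤ M' := le_max_left _ _
    _ = 1 / (K * r) * (M' * K * r) := by field_simp
    _ ≤ 1 / (K * r) * (η_s (Metric.closedBall x₀ r)).toReal := by
        apply mul_le_mul_of_nonneg_left hmeas (by positivity)
    _ ≤ ∫ x in Metric.closedBall x₀ r, upperHalfPlanePoissonKernel z x ∂η_s :=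
        by have h := setIntegral_ge_of_const_le measurableSet_closedBall
             (measure_ne_top _ _) hbound hint.integrableOn
           rw [smul_eq_mul, mul_comm] at h; exact h
    _ ≤ ∫ x, upperHalfPlanePoissonKernel z x ∂η_s :=
        setIntegral_le_integral hint (Eventually.of_forall hpos)
end
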